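/- arXiv:2207.12765 — 4 statements merged into one kernel-verified Lean document; each statement's English description precedes it below -/
import Mathlib

section
/- Let X be a strongly 0-dimensional, σ-compact, locally compact metrizable space. Then the set of all metrics d ∈ Met(X) whose range is contained in some closed totally disconnected subset of [0,∞) containing 0, and the set of all gap-like metrics in Met(X), are both nonmeager (of second Baire category) in the space (Met(X), D_X). -/
open Set
open scoped ENNReal

/-- The space `Met(X)` of metrics generating the topology of `X`. -/
def MetricCompat (X : Type*) [t : TopologicalSpace X] : Type _ :=
  { m : MetricSpace X // m.toUniformSpace.toTopologicalSpace = t }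

namespace MetricCompat

variable {X : Type*} [TopologicalSpace X]

/-- The distance function of an element of `Met(X)`. -/
noncomputable def dist (d : MetricCompat X) (x y : X) : ℝ := d.1.dist x y

/-- The supremum distance `D_X`, valued in `[0,∞]`. -/
noncomputable def supDist (d e : MetricCompat X) : ℝ≥0∞ :=
  ⨆ p : X × X, ENNReal.ofReal |d.dist p.1 p.2 - e.dist p.1 p.2|

/-- The topology on `Met(X)` induced by the open balls of `D_X`. -/
noncomputable instance : TopologicalSpace (MetricCompat X) :=
  TopologicalSpace.generateFrom
    { U | ∃ (d : MetricCompat X) (r : ℝ≥0∞), 0 < r ∧ U = { e | supDist d e < r } }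

end MetricCompat

set_option linter.unusedSectionVars false

namespace MetricCompat

variable {X : Type*} [tX : TopologicalSpace X]

theorem dist_self' (d : MetricCompat X) (x : X) : d.dist x x = 0 := d.1.dist_self x

theorem dist_comm' (d : MetricCompat X) (x y : X) : d.dist x y = d.dist y x :=
  d.1.dist_comm x y

theorem dist_triangle' (d : MetricCompat X) (x y z : X) :
    d.dist x z ≤ d.dist x y + d.dist y z := d.1.dist_triangle x y z

theorem dist_nonneg' (d : MetricCompat X) (x y : X) : 0 ≤ d.dist x y :=
  @dist_nonneg X d.1.toPseudoMetricSpace x y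

theorem dist_pos' (d : MetricCompat X) {x y : X} (h : x ≠ y) : 0 < d.dist x y :=
  (@dist_pos X d.1 x y).mpr h

theorem isOpen_distBall (d : MetricCompat X) (x : X) (ε : ℝ) :
    IsOpen {y | d.dist x y < ε} := by
  obtain ⟨m, hm⟩ := d
  subst hm
  have : {y | MetricCompat.dist ⟨m, rfl⟩ x y < ε} = @Metric.ball X m.toPseudoMetricSpace x ε := by
    ext y
    simp [Metric.mem_ball, MetricCompat.dist, m.dist_comm x y]
  rw [this]
  exact @Metric.isOpen_ball X m.toPseudoMetricSpace x ε

theorem compat_exists (d : MetricCompat X) {U : Set X} (hU : IsOpen U) {x : X} (hx : x ∈ U) :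
    ∃ ε > 0, ∀ y, d.dist x y < ε → y ∈ U := by
  obtain ⟨m, hm⟩ := d
  subst hm
  rcases (@Metric.isOpen_iff X m.toPseudoMetricSpace U).mp hU x hx with ⟨ε, hε, hball⟩
  refine ⟨ε, hε, fun y hy => hball ?_⟩
  rw [Metric.mem_ball]
  rw [m.dist_comm]
  exact hy

theorem continuous_dist_left (d : MetricCompat X) (x : X) : Continuous (d.dist x) := by
  obtain ⟨m, hm⟩ := d
  subst hm
  letI : MetricSpace X := m
  exact continuous_const.dist continuous_id

theorem supDist_le_ofReal {d e : MetricCompat X} {c : ℝ}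
    (h : ∀ x y, |d.dist x y - e.dist x y| ≤ c) : supDist d e ≤ ENNReal.ofReal c :=
  iSup_le fun p => ENNReal.ofReal_le_ofReal (h p.1 p.2)

theorem ofReal_le_supDist (d e : MetricCompat X) (x y : X) :
    ENNReal.ofReal |d.dist x y - e.dist x y| ≤ supDist d e :=
  le_iSup (fun p : X × X => ENNReal.ofReal |d.dist p.1 p.2 - e.dist p.1 p.2|) ((x, y) : X × X)

theorem abs_dist_le_of_supDist_le {d e : MetricCompat X} {c : ℝ} (hc : 0 ≤ c)
    (h : supDist d e ≤ ENNReal.ofReal c) (x y : X) : |d.dist x y - e.dist x y| ≤ c := by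
  have h1 : ENNReal.ofReal |d.dist x y - e.dist x y| ≤ ENNReal.ofReal c :=
    le_trans (ofReal_le_supDist d e x y) h
  rwa [ENNReal.ofReal_le_ofReal_iff hc, ] at h1

theorem supDist_self (d : MetricCompat X) : supDist d d = 0 :=
  le_antisymm (iSup_le fun p => by simp) (zero_le)

theorem supDist_comm (d e : MetricCompat X) : supDist d e = supDist e d := by
  unfold supDist
  congr 1; funext p; rw [abs_sub_comm]

theorem supDist_triangle (d e f : MetricCompat X) :
    supDist d f ≤ supDist d e + supDist e f := by
  refine iSup_le fun p => ?_
  calc ENNReal.ofReal |d.dist p.1 p.2 - f.dist p.1 p.2|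
      ≤ ENNReal.ofReal (|d.dist p.1 p.2 - e.dist p.1 p.2| + |e.dist p.1 p.2 - f.dist p.1 p.2|) :=
        ENNReal.ofReal_le_ofReal (abs_sub_le _ _ _)
    _ ≤ ENNReal.ofReal |d.dist p.1 p.2 - e.dist p.1 p.2|
        + ENNReal.ofReal |e.dist p.1 p.2 - f.dist p.1 p.2| := ENNReal.ofReal_add_le
    _ ≤ supDist d e + supDist e f :=
        add_le_add (ofReal_le_supDist d e p.1 p.2) (ofReal_le_supDist e f p.1 p.2)

theorem isOpen_ball (d : MetricCompat X) {r : ℝ≥0∞} (hr : 0 < r) :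
    IsOpen {e : MetricCompat X | supDist d e < r} :=
  TopologicalSpace.isOpen_generateFrom_of_mem ⟨d, r, hr, rfl⟩

theorem mem_ball_self (d : MetricCompat X) {r : ℝ≥0∞} (hr : 0 < r) :
    d ∈ {e : MetricCompat X | supDist d e < r} := by
  simp only [mem_setOf_eq, supDist_self]; exact hr

/-- in the generated topology, every open set contains a sup-distance ball around
each of its points. -/
theorem exists_ball_subset {U : Set (MetricCompat X)} (hU : IsOpen U) {d : MetricCompat X}
    (hd : d ∈ U) : ∃ ε : ℝ, 0 < ε ∧ ∀ e, supDist d e ≤ ENNReal.ofReal ε → e ∈ U := by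
  have hU' : TopologicalSpace.GenerateOpen
      { U | ∃ (d : MetricCompat X) (r : ℝ≥0∞), 0 < r ∧ U = { e | supDist d e < r } } U := hU
  clear hU
  revert hd
  induction hU' with
  | basic V hV =>
      obtain ⟨c, r, hr, rfl⟩ := hV
      intro hd
      have hcd : supDist c d < r := hd
      rcases ENNReal.lt_iff_exists_add_pos_lt.mp hcd with ⟨ρ, hρ, hlt⟩
      refine ⟨(ρ : ℝ), by exact_mod_cast hρ, fun e he => ?_⟩
      have : supDist c e ≤ supDist c d + supDist d e := supDist_triangle c d e
      have h2 : supDist c e < r := by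
        refine lt_of_le_of_lt (this.trans (add_le_add_right ?_ _)) hlt
        rw [ENNReal.ofReal_coe_nnreal] at he
        exact he
      exact h2
  | univ => exact fun _ => ⟨1, one_pos, fun e _ => trivial⟩

  | inter V W _ _ ihV ihW =>
      intro hd
      obtain ⟨ε₁, hε₁, h₁⟩ := ihV hd.1
      obtain ⟨ε₂, hε₂, h₂⟩ := ihW hd.2
      exact ⟨min ε₁ ε₂, lt_min hε₁ hε₂, fun e he =>
        ⟨h₁ e (he.trans (ENNReal.ofReal_le_ofReal (min_le_left _ _))),
         h₂ e (he.trans (ENNReal.ofReal_le_ofReal (min_le_right _ _)))⟩⟩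
  | sUnion S _ ih =>
      intro hd
      obtain ⟨V, hVS, hdV⟩ := hd
      obtain ⟨ε, hε, h⟩ := ih V hVS hdV
      exact ⟨ε, hε, fun e he => ⟨V, hVS, h e he⟩⟩

/-- Constructor: build an element of `Met(X)` from a distance function. -/
theorem exists_mk (f : X → X → ℝ) (h0 : ∀ x, f x x = 0)
    (hcomm : ∀ x y, f x y = f y x)
    (htri : ∀ x y z, f x z ≤ f x y + f y z)
    (hpos : ∀ x y, f x y = 0 → x = y)
    (H1 : ∀ x (ε : ℝ), 0 < ε → ∃ W, IsOpen W ∧ x ∈ W ∧ ∀ y ∈ W, f x y < ε)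
    (H2 : ∀ U, IsOpen U → ∀ x ∈ U, ∃ ε > 0, ∀ y, f x y < ε → y ∈ U) :
    ∃ d : MetricCompat X, ∀ x y, d.dist x y = f x y := by
  have H : ∀ s : Set X, IsOpen s ↔ ∀ x ∈ s, ∃ ε > 0, ∀ y, f x y < ε → y ∈ s := by
    intro s
    constructor
    · exact H2 s
    · intro hs
      rw [isOpen_iff_forall_mem_open]
      intro x hx
      obtain ⟨ε, hε, hball⟩ := hs x hx
      obtain ⟨W, hWopen, hxW, hW⟩ := H1 x ε hε
      exact ⟨W, fun y hy => hball y (hW y hy), hWopen, hxW⟩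
  refine ⟨⟨MetricSpace.ofDistTopology f h0 hcomm htri H hpos, rfl⟩, fun x y => rfl⟩

end MetricCompat


/-- A space is strongly `0`-dimensional if disjoint closed sets are separated by a clopen set. -/
def StronglyZeroDim (X : Type*) [TopologicalSpace X] : Prop :=
  ∀ A B : Set X, IsClosed A → IsClosed B → Disjoint A B →
    ∃ V : Set X, IsClopen V ∧ A ⊆ V ∧ Disjoint V B

/-- The collection `Z` of closed totally disconnected subsets of `[0,∞)` containing `0`. -/
def ZFamily : Set (Set ℝ) :=
  { S | S ⊆ Set.Ici 0 ∧ IsClosed S ∧ IsTotallyDisconnected S ∧ (0 : ℝ) ∈ S }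

/-- A metric `d` is gap-like if for every `p`, the set `{d(p,x) : x ∈ X}` is not dense in
any neighborhood of `0` in `[0,∞)`. -/
def GapLike {X : Type*} [TopologicalSpace X] (d : MetricCompat X) : Prop :=
  ∀ p : X, ¬ ∃ U : Set ℝ, U ∈ nhdsWithin 0 (Set.Ici 0) ∧ U ⊆ Set.Ici 0 ∧
    U ⊆ closure { r : ℝ | ∃ x : X, d.dist p x = r }

section Helpers
variable {X : Type*} [tX : TopologicalSpace X] [TopologicalSpace.MetrizableSpace X]
  [SigmaCompactSpace X] [LocallyCompactSpace X]

set_option maxRecDepth 10000 in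
theorem exists_base (hX : StronglyZeroDim X) :
    ∃ d0 : MetricCompat X, ∀ (x : X) (O : Set X), IsOpen O → x ∈ O →
      ∃ c, 0 < c ∧ ∀ y, y ∉ O → c ≤ d0.dist x y := by
  obtain ⟨m0, hm0⟩ := (⟨TopologicalSpace.metrizableSpaceMetric X, rfl⟩ :
    ∃ m : MetricSpace X, m.toUniformSpace.toTopologicalSpace = tX)
  set base : MetricCompat X := ⟨m0, hm0⟩ with hbase
  set K := CompactExhaustion.choice X with hKdef
  have step : ∀ (A : Set X) (n : ℕ), IsClopen A → IsCompact A →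
      ∃ B : Set X, IsClopen B ∧ IsCompact B ∧ A ⊆ B ∧ (K n : Set X) ⊆ B := by
    intro A n hA hAc
    obtain ⟨m, hm⟩ := K.exists_superset_of_isCompact (hAc.union (K.isCompact n))
    have hsub : A ∪ (K n : Set X) ⊆ interior (K (m+1)) := hm.trans (K.subset_interior_succ m)
    obtain ⟨B, hB, hAB, hdisj⟩ := hX (A ∪ (K n : Set X)) (interior (K (m+1)))ᶜ
      (hA.isClosed.union (K.isCompact n).isClosed) (isClosed_compl_iff.mpr isOpen_interior)
      (disjoint_compl_right_iff_subset.mpr hsub)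
    have hBsub : B ⊆ (K (m+1) : Set X) :=
      (disjoint_compl_right_iff_subset.mp hdisj).trans interior_subset
    exact ⟨B, hB, (K.isCompact (m+1)).of_isClosed_subset hB.isClosed hBsub,
      (subset_union_left).trans hAB, (subset_union_right).trans hAB⟩
  choose F hF1 hF2 hF3 hF4 using step
  let Vs : ℕ → {S : Set X // IsClopen S ∧ IsCompact S} := fun n => Nat.rec
    ⟨F ∅ 0 isClopen_empty isCompact_empty, hF1 _ _ _ _, hF2 _ _ _ _⟩
    (fun n p => ⟨F p.1 (n+1) p.2.1 p.2.2, hF1 _ _ _ _, hF2 _ _ _ _⟩) n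
  set V : ℕ → Set X := fun n => (Vs n).1 with hVdef
  have hVclopen : ∀ n, IsClopen (V n) := fun n => (Vs n).2.1
  have hVcompact : ∀ n, IsCompact (V n) := fun n => (Vs n).2.2
  have hVsucc : ∀ n, V n ⊆ V (n+1) := fun n => hF3 _ _ _ _
  have hVK : ∀ n, (K n : Set X) ⊆ V n := by
    intro n
    cases n with
    | zero => exact hF4 _ _ _ _
    | succ n => exact hF4 _ _ _ _
  have hVcover : ∀ x : X, ∃ n, x ∈ V n := by
    intro x
    obtain ⟨n, hn⟩ := K.exists_mem x
    exact ⟨n, hVK n hn⟩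
  haveI : ∀ (n : ℕ) (x : X), Decidable (x ∈ V n) := fun n x => Classical.dec _
  set J : X → ℕ := fun x => Nat.find (hVcover x) with hJdef
  set Q : ℕ → Set X := fun i => V i \ ⋃ j ∈ Finset.range i, V j with hQdef
  have hJQ : ∀ (y : X) (i : ℕ), J y = i ↔ y ∈ Q i := by
    intro y i
    rw [hJdef]
    rw [Nat.find_eq_iff]
    constructor
    · rintro ⟨h1, h2⟩
      refine ⟨h1, ?_⟩
      intro hmem
      rcases mem_iUnion₂.mp hmem with ⟨j, hj, hyj⟩
      exact h2 j (Finset.mem_range.mp hj) hyj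
    · rintro ⟨h1, h2⟩
      refine ⟨h1, ?_⟩
      intro m hm hym
      exact h2 (mem_iUnion₂.mpr ⟨m, Finset.mem_range.mpr hm, hym⟩)
  have hQclopen : ∀ i, IsClopen (Q i) :=
    fun i => (hVclopen i).diff (isClopen_biUnion_finset (fun j _ => hVclopen j))
  have hQx : ∀ x, x ∈ Q (J x) := fun x => (hJQ x (J x)).mp rfl
  -- the base distance with jumps
  set f0 : X → X → ℝ := fun x y =>
    min (base.dist x y) 1 + (if J x = J y then 0 else 4*((J x : ℝ) + (J y : ℝ) + 1)) with hf0
  have hf0self : ∀ x, f0 x x = 0 := by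
    intro x
    rw [hf0]
    show min (base.dist x x) 1 + (if J x = J x then (0:ℝ) else 4*((J x : ℝ) + (J x : ℝ) + 1)) = 0
    rw [if_pos rfl, base.dist_self' x, add_zero]
    exact min_eq_left zero_le_one
  have hf0comm : ∀ x y, f0 x y = f0 y x := by
    intro x y
    rw [hf0]
    show min (base.dist x y) 1 + (if J x = J y then (0:ℝ) else 4*((J x : ℝ) + (J y : ℝ) + 1))
      = min (base.dist y x) 1 + (if J y = J x then (0:ℝ) else 4*((J y : ℝ) + (J x : ℝ) + 1))
    rw [base.dist_comm' x y]
    congr 1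
    by_cases h : J x = J y
    · rw [if_pos h, if_pos h.symm]
    · rw [if_neg h, if_neg (fun hc => h hc.symm)]
      ring
  have hmin_nonneg : ∀ x y, 0 ≤ min (base.dist x y) 1 :=
    fun x y => le_min (base.dist_nonneg' x y) zero_le_one
  have hjump_nonneg : ∀ x y, (0:ℝ) ≤ (if J x = J y then 0 else 4*((J x : ℝ) + (J y : ℝ) + 1)) := by
    intro x y
    by_cases h : J x = J y
    · rw [if_pos h]
    · rw [if_neg h]; positivity
  have hf0_nonneg : ∀ x y, 0 ≤ f0 x y := fun x y => add_nonneg (hmin_nonneg x y) (hjump_nonneg x y)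
  have hf0_ge_jump : ∀ x y, J x ≠ J y → 4 ≤ f0 x y := by
    intro x y h
    have h1 : (4:ℝ) ≤ 4*((J x : ℝ) + (J y : ℝ) + 1) := by
      have hx : (0:ℝ) ≤ (J x : ℝ) := Nat.cast_nonneg _
      have hy : (0:ℝ) ≤ (J y : ℝ) := Nat.cast_nonneg _
      nlinarith [hx, hy]
    calc (4:ℝ) ≤ 4*((J x : ℝ) + (J y : ℝ) + 1) := h1
      _ = 0 + 4*((J x : ℝ) + (J y : ℝ) + 1) := by ring
      _ ≤ f0 x y := by
          rw [hf0]
          simp only [if_neg h]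
          exact add_le_add (hmin_nonneg x y) le_rfl
  have hf0tri : ∀ x y z, f0 x z ≤ f0 x y + f0 y z := by
    intro x y z
    have hmintri : min (base.dist x z) 1 ≤ min (base.dist x y) 1 + min (base.dist y z) 1 := by
      rcases le_or_gt 1 (base.dist x y) with h | h
      · have : min (base.dist x y) 1 = 1 := min_eq_right h
        rw [this]
        have := hmin_nonneg y z
        have := min_le_right (base.dist x z) 1
        linarith
      · rcases le_or_gt 1 (base.dist y z) with h2 | h2
        · have : min (base.dist y z) 1 = 1 := min_eq_right h2
          rw [this]
          have := hmin_nonneg x y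
          have := min_le_right (base.dist x z) 1
          linarith
        · rw [min_eq_left h.le, min_eq_left h2.le]
          calc min (base.dist x z) 1 ≤ base.dist x z := min_le_left _ _
            _ ≤ base.dist x y + base.dist y z := base.dist_triangle' x y z
      -- done
    have hctri : (if J x = J z then (0:ℝ) else 4*((J x : ℝ) + (J z : ℝ) + 1)) ≤
        (if J x = J y then (0:ℝ) else 4*((J x : ℝ) + (J y : ℝ) + 1)) +
        (if J y = J z then (0:ℝ) else 4*((J y : ℝ) + (J z : ℝ) + 1)) := by
      by_cases hxz : J x = J z
      · rw [if_pos hxz]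
        exact add_nonneg (hjump_nonneg x y) (hjump_nonneg y z)
      · by_cases hxy : J x = J y
        · have hyz : J y ≠ J z := fun h => hxz (hxy.trans h)
          rw [if_neg hxz, if_pos hxy, if_neg hyz, hxy]
          linarith
        · by_cases hyz : J y = J z
          · rw [if_neg hxz, if_neg hxy, if_pos hyz, hyz]
            linarith
          · rw [if_neg hxz, if_neg hxy, if_neg hyz]
            have h1 : (0:ℝ) ≤ (J y : ℝ) := Nat.cast_nonneg _
            have h2 : (0:ℝ) ≤ (J x : ℝ) := Nat.cast_nonneg _
            have h3 : (0:ℝ) ≤ (J z : ℝ) := Nat.cast_nonneg _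
            nlinarith [h1, h2, h3]
    calc f0 x z = min (base.dist x z) 1 + _ := rfl
      _ ≤ (min (base.dist x y) 1 + min (base.dist y z) 1) +
          ((if J x = J y then (0:ℝ) else 4*((J x : ℝ) + (J y : ℝ) + 1)) +
           (if J y = J z then (0:ℝ) else 4*((J y : ℝ) + (J z : ℝ) + 1))) :=
        add_le_add hmintri hctri
      _ = f0 x y + f0 y z := by rw [hf0]; ring
  have hf0pos : ∀ x y, f0 x y = 0 → x = y := by
    intro x y h
    by_cases hJ : J x = J y
    · have h2 : min (base.dist x y) 1 = 0 := by
        have := hmin_nonneg x y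
        simp only [hf0, if_pos hJ, add_zero] at h
        linarith
      have h3 : base.dist x y = 0 := by
        rcases min_eq_iff.mp h2 with h4 | h4
        · exact h4.1
        · linarith [h4.1]
      by_contra hne
      exact absurd h3 (ne_of_gt (base.dist_pos' hne))
    · have := hf0_ge_jump x y hJ
      linarith
  have H1 : ∀ x (ε : ℝ), 0 < ε → ∃ W, IsOpen W ∧ x ∈ W ∧ ∀ y ∈ W, f0 x y < ε := by
    intro x ε hε
    refine ⟨Q (J x) ∩ {y | base.dist x y < ε},
      ((hQclopen (J x)).isOpen).inter (base.isOpen_distBall x ε),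
      ⟨hQx x, by simp only [mem_setOf_eq, base.dist_self' x]; exact hε⟩, ?_⟩
    rintro y ⟨hy1, hy2⟩
    have hJ : J y = J x := (hJQ y (J x)).mpr hy1
    rw [hf0]
    show min (base.dist x y) 1 + (if J x = J y then (0:ℝ) else 4*((J x : ℝ) + (J y : ℝ) + 1)) < ε
    rw [if_pos hJ.symm, add_zero]
    exact lt_of_le_of_lt (min_le_left _ _) hy2
  have H2 : ∀ U, IsOpen U → ∀ x ∈ U, ∃ ε > 0, ∀ y, f0 x y < ε → y ∈ U := by
    intro U hU x hx
    obtain ⟨ε, hε, hb⟩ := base.compat_exists hU hx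
    refine ⟨min ε 1, lt_min hε one_pos, ?_⟩
    intro y hy
    by_cases hJ : J x = J y
    · have heq : f0 x y = min (base.dist x y) 1 := by
        rw [hf0]
        show min (base.dist x y) 1 + (if J x = J y then (0:ℝ) else 4*((J x : ℝ) + (J y : ℝ) + 1))
          = min (base.dist x y) 1
        rw [if_pos hJ, add_zero]
      rw [heq] at hy
      have h2 : base.dist x y < ε := by
        rcases lt_or_ge (base.dist x y) 1 with h | h
        · rw [min_eq_left h.le] at hy
          exact lt_of_lt_of_le hy (min_le_left _ _)
        · rw [min_eq_right h] at hy
          have := min_le_right ε 1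
          linarith
      exact hb y h2
    · have h4 := hf0_ge_jump x y hJ
      have := min_le_right ε 1
      linarith
  obtain ⟨d0, hd0⟩ := MetricCompat.exists_mk f0 hf0self hf0comm hf0tri hf0pos H1 H2
  refine ⟨d0, ?_⟩
  intro x O hO hxO
  set Fset := Q (J x) \ O with hFdef
  have hFclosed : IsClosed Fset := (hQclopen (J x)).isClosed.inter (isClosed_compl_iff.mpr hO)
  have hFc : IsCompact Fset :=
    (hVcompact (J x)).of_isClosed_subset hFclosed (diff_subset.trans diff_subset)
  rcases eq_empty_or_nonempty Fset with hF | hF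
  · refine ⟨4, by norm_num, ?_⟩
    intro y hy
    have hJ : J x ≠ J y := by
      intro h
      have hyQ : y ∈ Q (J x) := (hJQ y (J x)).mp h.symm
      exact (eq_empty_iff_forall_notMem.mp hF y) ⟨hyQ, hy⟩
    have h4 := hf0_ge_jump x y hJ
    rw [← hd0 x y] at h4
    exact h4
  · obtain ⟨y₀, hy₀, hmin⟩ := hFc.exists_isMinOn hF ((d0.continuous_dist_left x).continuousOn)
    have hy₀O : y₀ ∉ O := hy₀.2
    have hy₀x : y₀ ≠ x := fun h => hy₀O (h ▸ hxO)
    have hpos : 0 < d0.dist x y₀ := d0.dist_pos' (Ne.symm hy₀x)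
    refine ⟨min (d0.dist x y₀) 4, lt_min hpos (by norm_num), ?_⟩
    intro y hyO
    by_cases hJ : J y = J x
    · have hyF : y ∈ Fset := ⟨(hJQ y (J x)).mp hJ, hyO⟩
      calc min (d0.dist x y₀) 4 ≤ d0.dist x y₀ := min_le_left _ _
        _ ≤ d0.dist x y := isMinOn_iff.mp hmin y hyF
    · have h4 := hf0_ge_jump x y (fun h => hJ h.symm)
      rw [← hd0 x y] at h4
      calc min (d0.dist x y₀) 4 ≤ 4 := min_le_right _ _
        _ ≤ d0.dist x y := h4

theorem exists_pull (e d0 : MetricCompat X) {s : ℝ} (hs0 : 0 < s) (hs1 : s < 1) :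
    ∃ e' : MetricCompat X, ∀ x y, e'.dist x y = (1-s) * e.dist x y + s * d0.dist x y := by
  have h1s : 0 < 1 - s := by linarith
  apply MetricCompat.exists_mk (fun x y => (1-s) * e.dist x y + s * d0.dist x y)
  · intro x; rw [e.dist_self' x, d0.dist_self' x]; ring
  · intro x y; rw [e.dist_comm' x y, d0.dist_comm' x y]
  · intro x y z
    have h1 := e.dist_triangle' x y z
    have h2 := d0.dist_triangle' x y z
    nlinarith
  · intro x y h
    by_contra hne
    have h1 := e.dist_pos' hne
    have h2 := d0.dist_nonneg' x y
    nlinarith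
  · intro x ε hε
    refine ⟨{y | e.dist x y < ε/(2*(1-s))} ∩ {y | d0.dist x y < ε/(2*s)},
      (e.isOpen_distBall x _).inter (d0.isOpen_distBall x _), ?_, ?_⟩
    · constructor
      · simp only [mem_setOf_eq, e.dist_self' x]; positivity
      · simp only [mem_setOf_eq, d0.dist_self' x]; positivity
    · rintro y ⟨hy1, hy2⟩
      simp only [mem_setOf_eq] at hy1 hy2
      have e1 : (1-s) * e.dist x y < (1-s) * (ε/(2*(1-s))) := by
        exact mul_lt_mul_of_pos_left hy1 h1s
      have e2 : s * d0.dist x y < s * (ε/(2*s)) := mul_lt_mul_of_pos_left hy2 hs0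
      have r1 : (1-s) * (ε/(2*(1-s))) = ε/2 := by field_simp
      have r2 : s * (ε/(2*s)) = ε/2 := by field_simp
      rw [r1] at e1; rw [r2] at e2
      linarith
  · intro U hU x hx
    obtain ⟨ε₀, hε₀, hb⟩ := e.compat_exists hU hx
    refine ⟨(1-s)*ε₀, by positivity, ?_⟩
    intro y hy
    have h2 : s * d0.dist x y ≥ 0 := mul_nonneg hs0.le (d0.dist_nonneg' x y)
    have h3 : (1-s) * e.dist x y < (1-s) * ε₀ := by linarith
    exact hb y (lt_of_mul_lt_mul_left h3 h1s.le)

theorem avoid_nwd {N : Set (MetricCompat X)} (hN : IsNowhereDense N) (d : MetricCompat X)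
    {β : ℝ} (hβ : 0 < β) :
    ∃ (d' : MetricCompat X) (α : ℝ), 0 < α ∧ (∀ x y, |d'.dist x y - d.dist x y| ≤ β) ∧
      ∀ g : MetricCompat X, (∀ x y, |g.dist x y - d'.dist x y| ≤ α) → g ∉ N := by
  have hint : interior (closure N) = ∅ := hN
  have hb : ¬ ({e | MetricCompat.supDist d e < ENNReal.ofReal β} ⊆ closure N) := by
    intro hsub
    have h2 : {e | MetricCompat.supDist d e < ENNReal.ofReal β} ⊆ interior (closure N) :=
      interior_maximal hsub (MetricCompat.isOpen_ball d (ENNReal.ofReal_pos.mpr hβ))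
    rw [hint] at h2
    exact h2 (MetricCompat.mem_ball_self d (ENNReal.ofReal_pos.mpr hβ))
  obtain ⟨d', hd'ball, hd'N⟩ := not_subset.mp hb
  have hopen : IsOpen (closure N)ᶜ := isOpen_compl_iff.mpr isClosed_closure
  obtain ⟨α, hα, hball⟩ := MetricCompat.exists_ball_subset hopen hd'N
  refine ⟨d', α, hα, ?_, ?_⟩
  · intro x y
    rw [abs_sub_comm]
    exact MetricCompat.abs_dist_le_of_supDist_le hβ.le (le_of_lt hd'ball) x y
  · intro g hg hgN
    exact hball g (MetricCompat.supDist_le_ofReal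
      (fun x y => by rw [abs_sub_comm]; exact hg x y)) (subset_closure hgN)

theorem exists_partition' (hX : StronglyZeroDim X) (edist : X → X → ℝ)
    (heself : ∀ x, edist x x = 0) (hesymm : ∀ x y, edist x y = edist y x)
    (hetri : ∀ x y z, edist x z ≤ edist x y + edist y z)
    (heball : ∀ x ε, IsOpen {y | edist x y < ε}) {δ : ℝ} (hδ : 0 < δ) :
    ∃ cell : X → Set X, (∀ x, x ∈ cell x) ∧ (∀ x, IsClopen (cell x)) ∧
      (∀ x y, y ∈ cell x → cell y = cell x) ∧
      (∀ x, ∀ u ∈ cell x, ∀ v ∈ cell x, edist u v ≤ δ) := by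
  rcases isEmpty_or_nonempty X with hE | hNE
  · exact ⟨fun x => ∅, fun x => (IsEmpty.false x).elim, fun x => (IsEmpty.false x).elim,
      fun x => (IsEmpty.false x).elim, fun x => (IsEmpty.false x).elim⟩
  · -- clopen small neighborhoods
    have hG : ∀ x : X, ∃ V, IsClopen V ∧ x ∈ V ∧ V ⊆ {y | edist x y < δ/2} := by
      intro x
      have hxmem : x ∈ {y | edist x y < δ/2} := by
        simp only [mem_setOf_eq, heself x]
        positivity
      rcases hX {x} {y | edist x y < δ/2}ᶜ isClosed_singleton
        (isClosed_compl_iff.mpr (heball x (δ/2)))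
        (by simp [disjoint_singleton_left, hxmem]) with ⟨V, hV, hxV, hVd⟩
      refine ⟨V, hV, hxV (mem_singleton x), ?_⟩
      intro y hy
      by_contra hyc
      exact (disjoint_left.mp hVd) hy hyc
    choose G hGclopen hGmem hGsub using hG
    -- countable subcover
    set K := CompactExhaustion.choice X with hK
    have hsub : ∀ n : ℕ, ∃ T : Finset X, (K n : Set X) ⊆ ⋃ x ∈ T, G x := by
      intro n
      exact (K.isCompact n).elim_finite_subcover G (fun x => (hGclopen x).isOpen)
        (fun x _ => mem_iUnion.mpr ⟨x, hGmem x⟩)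
    choose T hT using hsub
    have hAcount : (⋃ n, (T n : Set X)).Countable :=
      countable_iUnion (fun n => (T n).countable_toSet)
    have hAne : (⋃ n, (T n : Set X)).Nonempty := by
      obtain ⟨x⟩ := hNE
      obtain ⟨n, hn⟩ := K.exists_mem x
      rcases mem_iUnion₂.mp (hT n hn) with ⟨a, ha, _⟩
      exact ⟨a, mem_iUnion.mpr ⟨n, ha⟩⟩
    obtain ⟨w, hw⟩ := hAcount.exists_eq_range hAne
    set W : ℕ → Set X := fun i => G (w i) with hWdef
    have hcov : ∀ x : X, ∃ i, x ∈ W i := by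
      intro x
      obtain ⟨n, hn⟩ := K.exists_mem x
      rcases mem_iUnion₂.mp (hT n hn) with ⟨a, ha, hxa⟩
      have : a ∈ range w := by rw [← hw]; exact mem_iUnion.mpr ⟨n, ha⟩
      rcases this with ⟨i, rfl⟩
      exact ⟨i, hxa⟩
    haveI : ∀ i x, Decidable (x ∈ W i) := fun i x => Classical.dec _
    set idx : X → ℕ := fun x => Nat.find (hcov x) with hidx
    set C : ℕ → Set X := fun i => W i \ ⋃ j ∈ Finset.range i, W j with hC
    have hCclopen : ∀ i, IsClopen (C i) := by
      intro i
      exact ((hGclopen _).diff (isClopen_biUnion_finset (fun j _ => hGclopen (w j))))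
    have hmemC : ∀ x, x ∈ C (idx x) := by
      intro x
      refine ⟨Nat.find_spec (hcov x), ?_⟩
      intro hmem
      rcases mem_iUnion₂.mp hmem with ⟨j, hj, hxj⟩
      exact Nat.find_min (hcov x) (Finset.mem_range.mp hj) hxj
    have hCidx : ∀ x i, x ∈ C i → idx x = i := by
      intro x i hx
      have h1 : idx x ≤ i := Nat.find_min' (hcov x) hx.1
      rcases lt_or_eq_of_le h1 with h | h
      · exact absurd (mem_iUnion₂.mpr ⟨idx x, Finset.mem_range.mpr h, Nat.find_spec (hcov x)⟩)
          hx.2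
      · exact h
    refine ⟨fun x => C (idx x), hmemC, fun x => hCclopen _, ?_, ?_⟩
    · intro x y hy
      show C (idx y) = C (idx x)
      rw [hCidx y (idx x) hy]
    · intro x u hu v hv
      have hu' : u ∈ W (idx x) := hu.1
      have hv' : v ∈ W (idx x) := hv.1
      have h1 := hGsub (w (idx x)) hu'
      have h2 := hGsub (w (idx x)) hv'
      simp only [mem_setOf_eq] at h1 h2
      calc edist u v ≤ edist u (w (idx x)) + edist (w (idx x)) v := hetri _ _ _
        _ ≤ δ/2 + δ/2 := by
            have := hesymm u (w (idx x))
            rw [this]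
            exact add_le_add h1.le h2.le
        _ = δ := by ring


set_option maxHeartbeats 1000000 in
theorem exists_gap (hX : StronglyZeroDim X) (e : MetricCompat X) {a b δ : ℝ}
    (hδ : 0 < δ) (hδa : δ < a) (hab : 2*δ < b - a) :
    ∃ (e' : MetricCompat X) (u v : ℝ), a < u ∧ v < b ∧ 0 < v - u ∧
      (∀ x y, e.dist x y ≤ e'.dist x y ∧ e'.dist x y ≤ e.dist x y + 3*δ) ∧
      (∀ x y, e'.dist x y ∉ Icc u v) := by
  classical
  have ha : 0 < a := lt_trans hδ hδa
  obtain ⟨cell, hmem, hclopen, hcelleq, hdiam⟩ := exists_partition' hX e.dist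
    (e.dist_self') (e.dist_comm') (e.dist_triangle') (e.isOpen_distBall) hδ
  -- the set distance between two cells
  set I : X → X → ℝ := fun x y => sInf (image2 e.dist (cell x) (cell y)) with hI
  have hne : ∀ x y, (image2 e.dist (cell x) (cell y)).Nonempty :=
    fun x y => ⟨e.dist x y, mem_image2_of_mem (hmem x) (hmem y)⟩
  have hbdd : ∀ x y, BddBelow (image2 e.dist (cell x) (cell y)) := by
    intro x y
    refine ⟨0, ?_⟩
    rintro r ⟨u, hu, v, hv, rfl⟩
    exact e.dist_nonneg' u v
  have hI_nonneg : ∀ x y, 0 ≤ I x y := by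
    intro x y
    refine le_csInf (hne x y) ?_
    rintro r ⟨u, hu, v, hv, rfl⟩
    exact e.dist_nonneg' u v
  have hI_le : ∀ x y, ∀ u ∈ cell x, ∀ v ∈ cell y, I x y ≤ e.dist u v :=
    fun x y u hu v hv => csInf_le (hbdd x y) (mem_image2_of_mem hu hv)
  have hle_I : ∀ x y, ∀ u ∈ cell x, ∀ v ∈ cell y, e.dist u v ≤ I x y + 2*δ := by
    intro x y u hu v hv
    have h1 : e.dist u v - 2*δ ≤ I x y := by
      refine le_csInf (hne x y) ?_
      rintro r ⟨p, hp, q, hq, rfl⟩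
      have t1 : e.dist u v ≤ e.dist u p + e.dist p q + e.dist q v := by
        calc e.dist u v ≤ e.dist u p + e.dist p v := e.dist_triangle' u p v
          _ ≤ e.dist u p + (e.dist p q + e.dist q v) := by
              exact add_le_add_right (e.dist_triangle' p q v) _
          _ = e.dist u p + e.dist p q + e.dist q v := by ring
      have t2 : e.dist u p ≤ δ := hdiam x u hu p hp
      have t3 : e.dist q v ≤ δ := hdiam y q hq v hv
      linarith
    linarith
  -- cell-eq invariance
  have hIcongr : ∀ x x' y, cell x' = cell x → I x' y = I x y := by
    intro x x' y h
    simp only [hI]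
    simp only [h]
  have hIcongr' : ∀ x y y', cell y' = cell y → I x y' = I x y := by
    intro x y y' h
    simp only [hI]
    simp only [h]
  have hIsymm : ∀ x y, I x y = I y x := by
    intro x y
    simp only [hI]
    have : image2 e.dist (cell x) (cell y) = image2 e.dist (cell y) (cell x) := by
      ext r
      constructor
      · rintro ⟨u, hu, v, hv, rfl⟩
        exact ⟨v, hv, u, hu, (e.dist_comm' u v).symm⟩
      · rintro ⟨u, hu, v, hv, rfl⟩
        exact ⟨v, hv, u, hu, (e.dist_comm' u v).symm⟩
    simp only [this]
  have hItri : ∀ x y z, I x z ≤ I x y + I y z + δ := by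
    intro x y z
    have key : ∀ r2 ∈ image2 e.dist (cell y) (cell z), I x z - δ - r2 ≤ I x y := by
      intro r2 hr2
      rcases hr2 with ⟨p, hp, q, hq, rfl⟩
      refine le_csInf (hne x y) ?_
      rintro r1 ⟨u, hu, v, hv, rfl⟩
      have t1 : I x z ≤ e.dist u q := hI_le x z u hu q hq
      have t2 : e.dist u q ≤ e.dist u v + e.dist v p + e.dist p q := by
        calc e.dist u q ≤ e.dist u v + e.dist v q := e.dist_triangle' u v q
          _ ≤ e.dist u v + (e.dist v p + e.dist p q) := by
              exact add_le_add_right (e.dist_triangle' v p q) _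
          _ = e.dist u v + e.dist v p + e.dist p q := by ring
      have t3 : e.dist v p ≤ δ := hdiam y v hv p hp
      linarith
    have key2 : I x z - δ - I x y ≤ I y z := by
      refine le_csInf (hne y z) ?_
      intro r2 hr2
      have := key r2 hr2
      linarith
    linarith
  -- rounding
  set g : ℝ → ℝ := fun r => δ * (⌈r/δ⌉₊ : ℕ) with hg
  have hg_ge : ∀ r, 0 ≤ r → r ≤ g r := by
    intro r hr
    simp only [hg]
    have h1 : r/δ ≤ (⌈r/δ⌉₊ : ℝ) := Nat.le_ceil _
    calc r = δ * (r/δ) := by field_simp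
      _ ≤ δ * (⌈r/δ⌉₊ : ℕ) := by exact mul_le_mul_of_nonneg_left h1 hδ.le
  have hg_lt : ∀ r, 0 ≤ r → g r < r + δ := by
    intro r hr
    simp only [hg]
    have h1 : (⌈r/δ⌉₊ : ℝ) < r/δ + 1 := Nat.ceil_lt_add_one (by positivity)
    have h2 : δ * (⌈r/δ⌉₊ : ℝ) < δ * (r/δ + 1) := mul_lt_mul_of_pos_left h1 hδ
    have h3 : δ * (r/δ + 1) = r + δ := by field_simp
    linarith
  have hg_mono : ∀ r r', r ≤ r' → g r ≤ g r' := by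
    intro r r' h
    simp only [hg]
    have h1 : r/δ ≤ r'/δ := by gcongr
    have h2 : (⌈r/δ⌉₊ : ℝ) ≤ (⌈r'/δ⌉₊ : ℝ) := by exact_mod_cast Nat.ceil_mono h1
    exact mul_le_mul_of_nonneg_left h2 hδ.le
  have hg_grid : ∀ k : ℕ, g (δ * k) = δ * k := by
    intro k
    simp only [hg]
    have h1 : (δ * k)/δ = (k:ℝ) := by field_simp
    rw [h1]
    norm_num
  -- the rounded cross-cell distance
  set R : X → X → ℝ := fun x y => g (I x y + 2*δ) with hR
  have hR_ge : ∀ x y, I x y + 2*δ ≤ R x y := fun x y => hg_ge _ (by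
    have := hI_nonneg x y; linarith)
  have hR_grid : ∀ x y, ∃ k : ℕ, R x y = δ * k := fun x y => ⟨_, rfl⟩
  have hR_lt : ∀ x y, R x y < I x y + 3*δ := by
    intro x y
    have h1 := hg_lt (I x y + 2*δ) (by have := hI_nonneg x y; linarith)
    simp only [hR]
    linarith
  have hR_ge_e : ∀ x y, e.dist x y ≤ R x y :=
    fun x y => le_trans (hle_I x y x (hmem x) y (hmem y)) (hR_ge x y)
  have hR_le_e : ∀ x y, R x y ≤ e.dist x y + 3*δ := by
    intro x y
    have h1 := hR_lt x y
    have h2 := hI_le x y x (hmem x) y (hmem y)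
    linarith
  have hR_pos : ∀ x y, 2*δ ≤ R x y := by
    intro x y
    have := hI_nonneg x y
    have := hR_ge x y
    linarith
  have hRsymm : ∀ x y, R x y = R y x := by
    intro x y
    simp only [hR]
    simp only [hIsymm x y]
  have hRcongr : ∀ x x' y, cell x' = cell x → R x' y = R x y := by
    intro x x' y h
    simp only [hR]
    simp only [hIcongr x x' y h]
  have hRcongr' : ∀ x y y', cell y' = cell y → R x y' = R x y := by
    intro x y y' h
    simp only [hR]
    simp only [hIcongr' x y y' h]
  have hRtri : ∀ x y z, R x z ≤ R x y + R y z := by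
    intro x y z
    obtain ⟨k1, hk1⟩ := hR_grid x y
    obtain ⟨k2, hk2⟩ := hR_grid y z
    have h1 : I x z + 2*δ ≤ R x y + R y z := by
      have t1 := hItri x y z
      have t2 := hR_ge x y
      have t3 := hR_ge y z
      have t4 := hI_nonneg y z
      linarith
    calc R x z = g (I x z + 2*δ) := rfl
      _ ≤ g (R x y + R y z) := hg_mono _ _ h1
      _ = R x y + R y z := by
          rw [hk1, hk2, ← mul_add]
          have : δ * ((k1:ℝ) + (k2:ℝ)) = δ * ((k1 + k2 : ℕ) : ℝ) := by push_cast; ring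
          rw [this]
          exact hg_grid (k1 + k2)
  -- the new distance function
  set f : X → X → ℝ := fun x y => if cell x = cell y then e.dist x y else R x y with hf
  have hf_same : ∀ x y, cell x = cell y → f x y = e.dist x y := by
    intro x y h
    show (if cell x = cell y then e.dist x y else R x y) = e.dist x y
    rw [if_pos h]
  have hf_diff : ∀ x y, ¬ (cell x = cell y) → f x y = R x y := by
    intro x y h
    show (if cell x = cell y then e.dist x y else R x y) = R x y
    rw [if_neg h]
  have hf_cases : ∀ x y, f x y = e.dist x y ∨ f x y = R x y := by
    intro x y
    by_cases h : cell x = cell y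
    · left; exact hf_same x y h
    · right; exact hf_diff x y h
  have hf_ge : ∀ x y, e.dist x y ≤ f x y := by
    intro x y
    rcases hf_cases x y with h | h
    · rw [h]
    · rw [h]; exact hR_ge_e x y
  have hf_le : ∀ x y, f x y ≤ e.dist x y + 3*δ := by
    intro x y
    rcases hf_cases x y with h | h
    · rw [h]; linarith [hδ.le]
    · rw [h]; exact hR_le_e x y
  have hfself : ∀ x, f x x = 0 := by
    intro x
    rw [hf_same x x rfl]
    exact e.dist_self' x
  have hfcomm : ∀ x y, f x y = f y x := by
    intro x y
    by_cases h : cell x = cell y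
    · rw [hf_same x y h, hf_same y x h.symm]
      exact e.dist_comm' x y
    · rw [hf_diff x y h, hf_diff y x (fun hc => h hc.symm)]
      exact hRsymm x y
  have hftri : ∀ x y z, f x z ≤ f x y + f y z := by
    intro x y z
    by_cases hxz : cell x = cell z
    · -- f x z = e.dist x z
      have hfxz : f x z = e.dist x z := hf_same x z hxz
      rw [hfxz]
      calc e.dist x z ≤ e.dist x y + e.dist y z := e.dist_triangle' x y z
        _ ≤ f x y + f y z := add_le_add (hf_ge x y) (hf_ge y z)
    · have hfxz : f x z = R x z := hf_diff x z hxz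
      rw [hfxz]
      by_cases hxy : cell x = cell y
      · have hyz : ¬ (cell y = cell z) := fun h => hxz (hxy.trans h)
        have hfyz : f y z = R y z := hf_diff y z hyz
        have hfxy : f x y = e.dist x y := hf_same x y hxy
        rw [hfyz, hfxy]
        have h1 : R x z = R y z := hRcongr y x z hxy
        rw [h1]
        have := e.dist_nonneg' x y
        linarith
      · have hfxy : f x y = R x y := hf_diff x y hxy
        by_cases hyz : cell y = cell z
        · have hfyz : f y z = e.dist y z := hf_same y z hyz
          rw [hfxy, hfyz]
          have h1 : R x z = R x y := hRcongr' x y z hyz.symm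
          rw [h1]
          have := e.dist_nonneg' y z
          linarith
        · have hfyz : f y z = R y z := hf_diff y z hyz
          rw [hfxy, hfyz]
          exact hRtri x y z
  have hfpos : ∀ x y, f x y = 0 → x = y := by
    intro x y h
    by_cases hc : cell x = cell y
    · have hfe : f x y = e.dist x y := hf_same x y hc
      rw [hfe] at h
      by_contra hne
      exact absurd h (ne_of_gt (e.dist_pos' hne))
    · have hfe : f x y = R x y := hf_diff x y hc
      rw [hfe] at h
      have := hR_pos x y
      linarith
  -- gap interval
  set k0 : ℕ := ⌊a/δ⌋₊ + 1 with hk0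
  have hak0 : a < δ * k0 := by
    have h1 : a/δ < (k0 : ℝ) := by
      rw [hk0]
      push_cast
      exact Nat.lt_floor_add_one _
    calc a = δ * (a/δ) := by field_simp
      _ < δ * k0 := mul_lt_mul_of_pos_left h1 hδ
  have hk0a : δ * k0 ≤ a + δ := by
    have h1 : (⌊a/δ⌋₊ : ℝ) ≤ a/δ := Nat.floor_le (by positivity)
    have h2 : δ * (⌊a/δ⌋₊ : ℝ) ≤ δ * (a/δ) := mul_le_mul_of_nonneg_left h1 hδ.le
    have h3 : δ * (a/δ) = a := by field_simp
    rw [hk0]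
    push_cast
    linarith
  set u : ℝ := δ * k0 + δ/4 with hu
  set v : ℝ := δ * k0 + 3*δ/4 with hv
  have hau : a < u := by rw [hu]; linarith
  have hvb : v < b := by rw [hv]; linarith
  have huv : 0 < v - u := by rw [hu, hv]; linarith
  have hgap : ∀ x y, f x y ∉ Icc u v := by
    intro x y hmem'
    rcases hmem' with ⟨h1, h2⟩
    by_cases hc : cell x = cell y
    · have hfe : f x y = e.dist x y := hf_same x y hc
      have hd : e.dist x y ≤ δ := by
        have hy : y ∈ cell x := hc ▸ hmem y
        exact hdiam x x (hmem x) y hy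
      rw [hfe] at h1
      have : u ≤ δ := le_trans h1 hd
      rw [hu] at this
      have hk0pos : (1:ℝ) ≤ (k0:ℝ) := by
        have h9 : (0:ℝ) ≤ (⌊a/δ⌋₊ : ℝ) := Nat.cast_nonneg _
        rw [hk0]; push_cast; linarith
      nlinarith
    · have hfe : f x y = R x y := hf_diff x y hc
      obtain ⟨k, hk⟩ := hR_grid x y
      rw [hfe, hk] at h1 h2
      have hgt : (k0 : ℝ) < (k : ℝ) := by
        have : δ * k0 < δ * k := by rw [hu] at h1; linarith
        exact lt_of_mul_lt_mul_left this hδ.le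
      have hge : (k0 : ℝ) + 1 ≤ (k : ℝ) := by
        have : k0 < k := by exact_mod_cast hgt
        exact_mod_cast this
      have : δ * (k0 + 1 : ℝ) ≤ δ * k := mul_le_mul_of_nonneg_left hge hδ.le
      rw [hv] at h2
      nlinarith
  -- compatibility
  have H1 : ∀ x (ε : ℝ), 0 < ε → ∃ W, IsOpen W ∧ x ∈ W ∧ ∀ y ∈ W, f x y < ε := by
    intro x ε hε
    refine ⟨cell x ∩ {y | e.dist x y < ε},
      (hclopen x).isOpen.inter (e.isOpen_distBall x ε), ⟨hmem x, by
        simp only [mem_setOf_eq, e.dist_self' x]; exact hε⟩, ?_⟩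
    rintro y ⟨hy1, hy2⟩
    have hcy : cell y = cell x := hcelleq x y hy1
    have hfe : f x y = e.dist x y := hf_same x y hcy.symm
    rw [hfe]
    exact hy2
  have H2 : ∀ U, IsOpen U → ∀ x ∈ U, ∃ ε > 0, ∀ y, f x y < ε → y ∈ U := by
    intro U hU x hx
    obtain ⟨ε₀, hε₀, hb⟩ := e.compat_exists hU hx
    refine ⟨min ε₀ (2*δ), lt_min hε₀ (by linarith), ?_⟩
    intro y hy
    by_cases hc : cell x = cell y
    · have hfe : f x y = e.dist x y := hf_same x y hc
      rw [hfe] at hy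
      exact hb y (lt_of_lt_of_le hy (min_le_left _ _))
    · have hfe : f x y = R x y := hf_diff x y hc
      rw [hfe] at hy
      have := hR_pos x y
      have := min_le_right ε₀ (2*δ)
      linarith
  obtain ⟨e', he'⟩ := MetricCompat.exists_mk f hfself hfcomm hftri hfpos H1 H2
  refine ⟨e', u, v, hau, hvb, huv, ?_, ?_⟩
  · intro x y
    rw [he' x y]
    exact ⟨hf_ge x y, hf_le x y⟩
  · intro x y
    rw [he' x y]
    exact hgap x y

set_option maxHeartbeats 1000000 in
theorem step_lemma (hX : StronglyZeroDim X) (d0 : MetricCompat X)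
    {Nn : Set (MetricCompat X)} (hNn : IsNowhereDense Nn) (d : MetricCompat X)
    (hinv : ∀ x y, |d.dist x y - d0.dist x y| ≤ 1)
    {Bg κ a b : ℝ} (hB : 0 < Bg) (hκ0 : 0 < κ) (hκ1 : κ ≤ 1) (ha : 0 < a) (hab : a < b) :
    ∃ (d' : MetricCompat X) (B' u v : ℝ),
      0 < B' ∧
      (∀ x y, |d'.dist x y - d0.dist x y| ≤ 1) ∧
      (∀ x y, |d'.dist x y - d.dist x y| ≤ Bg - B') ∧
      B' ≤ Bg/2 ∧
      (∃ t, 0 < t ∧ (∀ x y, t * d0.dist x y - t*κ ≤ d'.dist x y) ∧ B' ≤ t * κ) ∧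
      a < u ∧ u < v ∧ v < b ∧ (∀ x y, d'.dist x y ∉ Icc u v) ∧ 3*B' ≤ v - u ∧
      (∀ g : MetricCompat X, (∀ x y, |g.dist x y - d'.dist x y| ≤ B') → g ∉ Nn) := by
  set t := min (Bg/8) (1/2) with ht
  have ht0 : 0 < t := lt_min (by linarith) (by norm_num)
  have ht1 : t < 1 := lt_of_le_of_lt (min_le_right _ _) (by norm_num)
  have htB : t ≤ Bg/8 := min_le_left _ _
  have htκ : t * κ ≤ t := by nlinarith
  obtain ⟨e1, he1⟩ := exists_pull d d0 ht0 ht1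
  have he1d : ∀ x y, |e1.dist x y - d.dist x y| ≤ t := by
    intro x y
    rw [he1 x y]
    have heq : (1-t) * d.dist x y + t * d0.dist x y - d.dist x y
        = t * (d0.dist x y - d.dist x y) := by ring
    rw [heq, abs_mul, abs_of_pos ht0]
    have h2 : |d0.dist x y - d.dist x y| ≤ 1 := by rw [abs_sub_comm]; exact hinv x y
    nlinarith
  have he1d0 : ∀ x y, |e1.dist x y - d0.dist x y| ≤ 1 - t := by
    intro x y
    rw [he1 x y]
    have heq : (1-t) * d.dist x y + t * d0.dist x y - d0.dist x y
        = (1-t) * (d.dist x y - d0.dist x y) := by ring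
    rw [heq, abs_mul, abs_of_pos (by linarith : (0:ℝ) < 1 - t)]
    have h2 := hinv x y
    nlinarith [abs_nonneg (d.dist x y - d0.dist x y)]
  have he1floor : ∀ x y, t * d0.dist x y ≤ e1.dist x y := by
    intro x y
    rw [he1 x y]
    have := d.dist_nonneg' x y
    nlinarith
  set δ := min (t * κ / 8) (min (a/2) ((b-a)/8)) with hδdef
  have hδ0 : 0 < δ := lt_min (by positivity) (lt_min (by linarith) (by linarith))
  have hδa : δ < a := by
    have h1 : δ ≤ a/2 := (min_le_right _ _).trans (min_le_left _ _)
    linarith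
  have hδab : 2*δ < b - a := by
    have h1 : δ ≤ (b-a)/8 := (min_le_right _ _).trans (min_le_right _ _)
    linarith
  have hδκ : δ ≤ t*κ/8 := min_le_left _ _
  obtain ⟨e2, u', v', hau', hv'b, huv', hbound, hgap⟩ := exists_gap hX e1 hδ0 hδa hδab
  set β := min δ ((v'-u')/8) with hβdef
  have hβ0 : 0 < β := lt_min hδ0 (by linarith)
  have hβδ : β ≤ δ := min_le_left _ _
  have hβuv : β ≤ (v'-u')/8 := min_le_right _ _
  obtain ⟨d', α, hα, hd'e2, havoid⟩ := avoid_nwd hNn e2 hβ0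
  set B' := min (min α β) (min (Bg/4) (t*κ)) with hB'def
  have hB'0 : 0 < B' := lt_min (lt_min hα hβ0) (lt_min (by linarith) (by positivity))
  have hB'α : B' ≤ α := (min_le_left _ _).trans (min_le_left _ _)
  have hB'β : B' ≤ β := (min_le_left _ _).trans (min_le_right _ _)
  have hB'B : B' ≤ Bg/4 := (min_le_right _ _).trans (min_le_left _ _)
  have hB'tκ : B' ≤ t*κ := (min_le_right _ _).trans (min_le_right _ _)
  have he2e1 : ∀ x y, |e2.dist x y - e1.dist x y| ≤ 3*δ := by
    intro x y
    obtain ⟨hl, hr⟩ := hbound x y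
    rw [abs_le]
    constructor <;> linarith
  refine ⟨d', B', u' + β, v' - β, hB'0, ?_, ?_, ?_, ?_, ?_, ?_, ?_, ?_, ?_, ?_⟩
  · intro x y
    have h1 := hd'e2 x y
    have h2 := he2e1 x y
    have h3 := he1d0 x y
    have habs : |d'.dist x y - d0.dist x y| ≤ β + 3*δ + (1-t) := by
      have := abs_sub_le (d'.dist x y) (e2.dist x y) (d0.dist x y)
      have := abs_sub_le (e2.dist x y) (e1.dist x y) (d0.dist x y)
      linarith
    have : β + 3*δ ≤ t/2 := by nlinarith
    linarith
  · intro x y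
    have h1 := hd'e2 x y
    have h2 := he2e1 x y
    have h3 := he1d x y
    have habs : |d'.dist x y - d.dist x y| ≤ β + 3*δ + t := by
      have := abs_sub_le (d'.dist x y) (e2.dist x y) (d.dist x y)
      have := abs_sub_le (e2.dist x y) (e1.dist x y) (d.dist x y)
      linarith
    have h4 : β + 3*δ ≤ t/2 := by nlinarith
    have h5 : t ≤ Bg/8 := htB
    linarith
  · linarith
  · refine ⟨t, ht0, ?_, hB'tκ⟩
    intro x y
    have h1 := he1floor x y
    have h2 := (hbound x y).1
    have h3 := hd'e2 x y
    have h4 : e2.dist x y - d'.dist x y ≤ β := by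
      have := abs_le.mp h3
      linarith [(abs_le.mp h3).1]
    have hβtκ : β ≤ t*κ := by nlinarith
    linarith
  · linarith
  · have : 2*β ≤ (v'-u')/4 := by linarith
    linarith
  · linarith
  · intro x y hmem
    rcases hmem with ⟨h1, h2⟩
    have h3 := abs_le.mp (hd'e2 x y)
    exact hgap x y ⟨by linarith, by linarith⟩
  · have : 2*β ≤ (v'-u')/4 := by linarith
    nlinarith
  · intro g hg
    exact havoid g (fun x y => (hg x y).trans hB'α)

set_option maxHeartbeats 2000000 in
theorem master (hX : StronglyZeroDim X) (N : ℕ → Set (MetricCompat X))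
    (hN : ∀ n, IsNowhereDense (N n)) :
    ∃ fM : MetricCompat X, (∀ n, fM ∉ N n) ∧
      (∀ c d : ℝ, 0 ≤ c → c < d → ∃ u v, c < u ∧ u < v ∧ v < d ∧
        ∀ x y, fM.dist x y ∉ Icc u v) := by
  classical
  obtain ⟨d0, hd0floor⟩ := exists_base hX
  -- task enumeration
  obtain ⟨task, htask, htask_surj⟩ : ∃ task : ℕ → ℝ × ℝ,
      (∀ n, 0 < (task n).1 ∧ (task n).1 < (task n).2) ∧
      (∀ p q : ℚ, 0 < p → p < q → ∃ n, task n = ((p:ℝ), (q:ℝ))) := by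
    refine ⟨fun n => if h : (0:ℚ) < ((Denumerable.eqv (ℚ × ℚ)).symm n).1 ∧
        ((Denumerable.eqv (ℚ × ℚ)).symm n).1 < ((Denumerable.eqv (ℚ × ℚ)).symm n).2 then
        ((((Denumerable.eqv (ℚ × ℚ)).symm n).1 : ℝ), ((((Denumerable.eqv (ℚ × ℚ)).symm n).2 : ℝ)))
        else (1, 2), ?_, ?_⟩
    · intro n
      dsimp only
      split
      · rename_i h
        refine ⟨?_, ?_⟩
        · show (0:ℝ) < ((((Denumerable.eqv (ℚ × ℚ)).symm n).1 : ℚ) : ℝ)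
          exact_mod_cast h.1
        · show ((((Denumerable.eqv (ℚ × ℚ)).symm n).1 : ℚ) : ℝ)
            < ((((Denumerable.eqv (ℚ × ℚ)).symm n).2 : ℚ) : ℝ)
          exact_mod_cast h.2
      · norm_num
    · intro p q hp hpq
      refine ⟨Denumerable.eqv (ℚ × ℚ) (p, q), ?_⟩
      dsimp only
      simp only [Equiv.symm_apply_apply]
      rw [dif_pos ⟨hp, hpq⟩]
  set κ : ℕ → ℝ := fun n => (1/2 : ℝ)^n with hκdef
  have hκ0 : ∀ n, 0 < κ n := fun n => by positivity
  have hκ1 : ∀ n, κ n ≤ 1 := fun n => by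
    rw [hκdef]
    exact pow_le_one₀ (by norm_num) (by norm_num)
  -- the recursion
  set SInv : MetricCompat X × ℝ → Prop :=
    fun s => (∀ x y, |s.1.dist x y - d0.dist x y| ≤ 1) ∧ 0 < s.2 with hSInv
  set Rel : ℕ → MetricCompat X × ℝ → MetricCompat X × ℝ → Prop := fun n s s' =>
    (∀ x y, |s'.1.dist x y - s.1.dist x y| ≤ s.2 - s'.2) ∧ s'.2 ≤ s.2/2 ∧
    (∃ t, 0 < t ∧ (∀ x y, t * d0.dist x y - t * κ n ≤ s'.1.dist x y) ∧ s'.2 ≤ t * κ n) ∧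
    (∃ u v, (task n).1 < u ∧ u < v ∧ v < (task n).2 ∧ (∀ x y, s'.1.dist x y ∉ Icc u v) ∧
      3*s'.2 ≤ v - u) ∧
    (∀ g : MetricCompat X, (∀ x y, |g.dist x y - s'.1.dist x y| ≤ s'.2) → g ∉ N n) with hRel
  have hstep : ∀ (n : ℕ) (s : {s : MetricCompat X × ℝ // SInv s}),
      ∃ s' : {s : MetricCompat X × ℝ // SInv s}, Rel n s.1 s'.1 := by
    rintro n ⟨⟨d, Bg⟩, hinv, hBg⟩
    obtain ⟨d', B', u, v, hB'0, hinv', hstepb, hB'half, hfloor, hau, huv, hvb, hgap, h3B, hav⟩ :=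
      step_lemma hX d0 (hN n) d hinv hBg (hκ0 n) (hκ1 n) (htask n).1 (htask n).2
    exact ⟨⟨(d', B'), hinv', hB'0⟩, hstepb, hB'half, hfloor, ⟨u, v, hau, huv, hvb, hgap, h3B⟩, hav⟩
  choose nxt hnxt using hstep
  have hinit : SInv (d0, 1) := by
    constructor
    · intro x y
      simp only [sub_self, abs_zero]
      norm_num
    · norm_num
  set seq : ℕ → {s : MetricCompat X × ℝ // SInv s} := fun n =>
    Nat.rec ⟨(d0, (1:ℝ)), hinit⟩ (fun n s => nxt n s) n with hseqdef
  have hrel : ∀ n, Rel n (seq n).1 (seq (n+1)).1 := fun n => hnxt n (seq n)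
  set D : ℕ → MetricCompat X := fun n => (seq n).1.1 with hD
  set Bd : ℕ → ℝ := fun n => (seq n).1.2 with hBd
  have hBpos : ∀ n, 0 < Bd n := fun n => (seq n).2.2
  have hBinv : ∀ n, ∀ x y, |(D n).dist x y - d0.dist x y| ≤ 1 := fun n => (seq n).2.1
  have hBhalf : ∀ n, Bd (n+1) ≤ Bd n / 2 := fun n => (hrel n).2.1
  have hstepbd : ∀ n x y, |(D (n+1)).dist x y - (D n).dist x y| ≤ Bd n - Bd (n+1) :=
    fun n => (hrel n).1
  have hfloor : ∀ n, ∃ t, 0 < t ∧ (∀ x y, t * d0.dist x y - t * κ n ≤ (D (n+1)).dist x y) ∧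
      Bd (n+1) ≤ t * κ n := fun n => (hrel n).2.2.1
  have hgapseq : ∀ n, ∃ u v, (task n).1 < u ∧ u < v ∧ v < (task n).2 ∧
      (∀ x y, (D (n+1)).dist x y ∉ Icc u v) ∧ 3*Bd (n+1) ≤ v - u := fun n => (hrel n).2.2.2.1
  have havseq : ∀ n, ∀ g : MetricCompat X,
      (∀ x y, |g.dist x y - (D (n+1)).dist x y| ≤ Bd (n+1)) → g ∉ N n :=
    fun n => (hrel n).2.2.2.2
  have hB0 : Bd 0 = 1 := rfl
  have hBle : ∀ n, Bd n ≤ (1/2:ℝ)^n := by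
    intro n
    induction n with
    | zero => rw [hB0]; norm_num
    | succ n ih =>
        have h1 := hBhalf n
        have h2 : (1/2:ℝ)^(n+1) = (1/2)^n/2 := by ring
        rw [h2]
        linarith
  have hcum : ∀ n m, n ≤ m → ∀ x y, |(D m).dist x y - (D n).dist x y| ≤ Bd n - Bd m := by
    intro n m hnm
    induction m, hnm using Nat.le_induction with
    | base => intro x y; simp [sub_self]
    | succ m hnm ih =>
        intro x y
        have h1 := hstepbd m x y
        have h2 := ih x y
        have := abs_sub_le ((D (m+1)).dist x y) ((D m).dist x y) ((D n).dist x y)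
        linarith
  -- pointwise limits
  have hcauchy : ∀ x y, CauchySeq (fun n => (D n).dist x y) := by
    intro x y
    rw [Metric.cauchySeq_iff']
    intro ε hε
    obtain ⟨n0, hn0⟩ := exists_pow_lt_of_lt_one hε (by norm_num : (1/2:ℝ) < 1)
    refine ⟨n0, fun n hn => ?_⟩
    rw [Real.dist_eq]
    have h1 := hcum n0 n hn x y
    have h2 := hBpos n
    have h3 := hBle n0
    calc |(D n).dist x y - (D n0).dist x y| ≤ Bd n0 - Bd n := h1
      _ < Bd n0 := by linarith
      _ ≤ (1/2:ℝ)^n0 := h3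
      _ < ε := hn0
  have hconv : ∀ x y, ∃ L, Filter.Tendsto (fun n => (D n).dist x y) Filter.atTop (nhds L) :=
    fun x y => cauchySeq_tendsto_of_complete (hcauchy x y)
  choose fl hfl using hconv
  have hflD : ∀ n x y, |fl x y - (D n).dist x y| ≤ Bd n := by
    intro n x y
    have htend : Filter.Tendsto (fun m => |(D m).dist x y - (D n).dist x y|)
        Filter.atTop (nhds |fl x y - (D n).dist x y|) :=
      ((hfl x y).sub_const _).abs
    refine le_of_tendsto htend ?_
    filter_upwards [Filter.eventually_ge_atTop n] with m hm
    have h1 := hcum n m hm x y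
    have h2 := hBpos m
    linarith
  -- metric axioms for the limit
  have hflself : ∀ x, fl x x = 0 := by
    intro x
    have h1 : Filter.Tendsto (fun n => (D n).dist x x) Filter.atTop (nhds 0) := by
      have : (fun n => (D n).dist x x) = fun n => (0:ℝ) := by
        funext n; exact (D n).dist_self' x
      rw [this]
      exact tendsto_const_nhds
    exact tendsto_nhds_unique (hfl x x) h1
  have hflcomm : ∀ x y, fl x y = fl y x := by
    intro x y
    have h1 : (fun n => (D n).dist x y) = (fun n => (D n).dist y x) := by
      funext n; exact (D n).dist_comm' x y
    exact tendsto_nhds_unique (hfl x y) (h1 ▸ hfl y x)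
  have hfltri : ∀ x y z, fl x z ≤ fl x y + fl y z := by
    intro x y z
    have h1 : Filter.Tendsto (fun n => (D n).dist x y + (D n).dist y z) Filter.atTop
        (nhds (fl x y + fl y z)) := (hfl x y).add (hfl y z)
    refine le_of_tendsto_of_tendsto' (hfl x z) h1 ?_
    intro n
    exact (D n).dist_triangle' x y z
  have hflfloor : ∀ n x y, ∃ t, 0 < t ∧ t * d0.dist x y - 2 * (t * κ n) ≤ fl x y := by
    intro n x y
    obtain ⟨t, ht0, htf, htB⟩ := hfloor n
    refine ⟨t, ht0, ?_⟩
    have h1 := htf x y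
    have h2 := hflD (n+1) x y
    have h3 := (abs_le.mp h2).1
    linarith
  have hκsmall : ∀ ε : ℝ, 0 < ε → ∃ n : ℕ, κ n < ε := by
    intro ε hε
    obtain ⟨n, hn⟩ := exists_pow_lt_of_lt_one hε (by norm_num : (1/2:ℝ) < 1)
    exact ⟨n, hn⟩
  have hflpos : ∀ x y, fl x y = 0 → x = y := by
    intro x y h
    by_contra hne
    have hr : 0 < d0.dist x y := d0.dist_pos' hne
    obtain ⟨n, hn⟩ := hκsmall (d0.dist x y / 2) (by linarith)
    obtain ⟨t, ht0, htf⟩ := hflfloor n x y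
    rw [h] at htf
    nlinarith [hκ0 n]
  have H1 : ∀ x (ε : ℝ), 0 < ε → ∃ W, IsOpen W ∧ x ∈ W ∧ ∀ y ∈ W, fl x y < ε := by
    intro x ε hε
    obtain ⟨n, hn⟩ := hκsmall (ε/4) (by linarith)
    have hBn : Bd n < ε/4 := lt_of_le_of_lt (hBle n) hn
    refine ⟨{y | (D n).dist x y < ε/2}, (D n).isOpen_distBall x (ε/2), by
      simp only [mem_setOf_eq, (D n).dist_self' x]; linarith, ?_⟩
    intro y hy
    simp only [mem_setOf_eq] at hy
    have h1 := hflD n x y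
    have h2 := (abs_le.mp h1).2
    linarith
  have H2 : ∀ U, IsOpen U → ∀ x ∈ U, ∃ ε > 0, ∀ y, fl x y < ε → y ∈ U := by
    intro U hU x hx
    obtain ⟨c, hc0, hc⟩ := hd0floor x U hU hx
    obtain ⟨n, hn⟩ := hκsmall (c/2) (by linarith)
    obtain ⟨t, ht0, htf, htB⟩ := hfloor n
    refine ⟨t * c - 2 * (t * κ n), by nlinarith, ?_⟩
    intro y hy
    by_contra hyU
    have h1 := hc y hyU
    have h2 := htf x y
    have h3 := hflD (n+1) x y
    have h4 := (abs_le.mp h3).1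
    have h5 : t * d0.dist x y - 2 * (t * κ n) ≤ fl x y := by linarith
    have h6 : t * c ≤ t * d0.dist x y := by nlinarith
    linarith
  obtain ⟨fM, hfM⟩ := MetricCompat.exists_mk fl hflself hflcomm hfltri hflpos H1 H2
  refine ⟨fM, ?_, ?_⟩
  · intro n
    refine havseq n fM ?_
    intro x y
    rw [hfM x y]
    exact hflD (n+1) x y
  · intro c d hc0 hcd
    have hw0 : 0 < (c+d)/2 := by linarith
    obtain ⟨p, hp1, hp2⟩ := exists_rat_btwn (show (c+d)/2 < ((c+d)/2 + d)/2 by linarith)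
    have hpd : (p:ℝ) < d := by linarith
    obtain ⟨q, hq1, hq2⟩ := exists_rat_btwn hpd
    have hp0 : 0 < p := by
      have h9 : (0:ℝ) < (p:ℝ) := lt_trans hw0 hp1
      exact_mod_cast h9
    have hpq : p < q := by exact_mod_cast hq1
    obtain ⟨n, hn⟩ := htask_surj p q hp0 hpq
    obtain ⟨u, v, hau, huv, hvb, hgapn, h3B⟩ := hgapseq n
    have hau' : (p:ℝ) < u := by rw [hn] at hau; exact hau
    have hvb' : v < (q:ℝ) := by rw [hn] at hvb; exact hvb
    have hBp := hBpos (n+1)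
    refine ⟨u + Bd (n+1), v - Bd (n+1), ?_, ?_, ?_, ?_⟩
    · have h9 : c < (p:ℝ) := by linarith
      linarith
    · linarith
    · linarith
    · intro x y hmemI
      rcases hmemI with ⟨h1, h2⟩
      rw [hfM x y] at h1 h2
      have h3 := hflD (n+1) x y
      have h4 := (abs_le.mp h3).1
      have h5 := (abs_le.mp h3).2
      exact hgapn x y ⟨by linarith, by linarith⟩

end Helpers

/-- Corollary 2.17 -/
theorem nonmeager_totallyDisconnectedRange_and_gapLike
    {X : Type*} [TopologicalSpace X] [TopologicalSpace.MetrizableSpace X]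
    [SigmaCompactSpace X] [LocallyCompactSpace X]
    (hX : StronglyZeroDim X) :
    ¬ IsMeagre { d : MetricCompat X | ∃ S ∈ ZFamily, ∀ x y : X, d.dist x y ∈ S } ∧
    ¬ IsMeagre { d : MetricCompat X | GapLike d } := by
  classical
  -- a common construction: given any meagre covering, produce a metric avoiding it whose
  -- range has gaps everywhere
  have main : ∀ S : Set (MetricCompat X), IsMeagre S →
      ∃ fM : MetricCompat X, fM ∉ S ∧
        (∀ c d : ℝ, 0 ≤ c → c < d → ∃ u v, c < u ∧ u < v ∧ v < d ∧
          ∀ x y, fM.dist x y ∉ Icc u v) := by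
    intro S hS
    rw [isMeagre_iff_countable_union_isNowhereDense] at hS
    obtain ⟨Sfam, hnwd, hcount, hsub⟩ := hS
    have hNseq : ∃ g : ℕ → Set (MetricCompat X),
        (∀ n, IsNowhereDense (g n)) ∧ ⋃₀ Sfam ⊆ ⋃ n, g n := by
      rcases Set.eq_empty_or_nonempty Sfam with hemp | hne
      · exact ⟨fun _ => ∅, fun _ => isNowhereDense_empty, by simp [hemp]⟩
      · obtain ⟨g, hg⟩ := hcount.exists_eq_range hne
        refine ⟨g, ?_, ?_⟩
        · intro n
          exact hnwd (g n) (by rw [hg]; exact mem_range_self n)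
        · rw [hg, sUnion_range]
    obtain ⟨g, hgnwd, hgsub⟩ := hNseq
    obtain ⟨fM, hfMavoid, hfMgap⟩ := master hX g hgnwd
    refine ⟨fM, ?_, hfMgap⟩
    intro hfMS
    rcases mem_iUnion.mp (hgsub (hsub hfMS)) with ⟨n, hn⟩
    exact hfMavoid n hn
  constructor
  · intro hS
    obtain ⟨fM, hfMS, hfMgap⟩ := main _ hS
    refine hfMS ?_
    refine ⟨closure {r : ℝ | ∃ x y : X, fM.dist x y = r} ∪ {0}, ⟨?_, ?_, ?_, ?_⟩, ?_⟩
    · -- contained in [0, ∞)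
      rintro r (hr | hr)
      · refine (isClosed_Ici.closure_subset_iff.mpr ?_) hr
        rintro s ⟨x, y, rfl⟩
        exact fM.dist_nonneg' x y
      · rw [mem_singleton_iff] at hr
        rw [hr]
        exact self_mem_Ici
    · exact isClosed_closure.union isClosed_singleton
    · -- totally disconnected
      intro t hts htc
      intro x hx y hy
      by_contra hne
      have hIci : closure {r : ℝ | ∃ x y : X, fM.dist x y = r} ∪ {0} ⊆ Ici 0 := by
        rintro r (hr | hr)
        · refine (isClosed_Ici.closure_subset_iff.mpr ?_) hr
          rintro s ⟨x, y, rfl⟩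
          exact fM.dist_nonneg' x y
        · rw [mem_singleton_iff] at hr
          rw [hr]
          exact self_mem_Ici
      have key : ∀ z w : ℝ, z ∈ t → w ∈ t → z < w → False := by
        intro z w hz hw hzw
        have hz0 : 0 ≤ z := hIci (hts hz)
        obtain ⟨u, v, hzu, huv, hvw, hgap⟩ := hfMgap z w hz0 hzw
        have hmid : (u+v)/2 ∈ t := htc.Icc_subset hz hw ⟨by linarith, by linarith⟩
        rcases hts hmid with hmem | hmem
        · have hVsub : {r : ℝ | ∃ x y : X, fM.dist x y = r} ⊆ (Ioo u v)ᶜ := by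
            rintro r ⟨x, y, rfl⟩ hrIoo
            exact hgap x y ⟨hrIoo.1.le, hrIoo.2.le⟩
          have hclsub : closure {r : ℝ | ∃ x y : X, fM.dist x y = r} ⊆ (Ioo u v)ᶜ :=
            (isOpen_Ioo.isClosed_compl).closure_subset_iff.mpr hVsub
          exact hclsub hmem ⟨by linarith, by linarith⟩
        · rw [mem_singleton_iff] at hmem
          have : 0 < (u+v)/2 := by linarith
          rw [hmem] at this
          exact lt_irrefl _ this
      rcases lt_or_gt_of_ne hne with h | h
      · exact absurd (key x y hx hy h) not_false
      · exact absurd (key y x hy hx h) not_false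
    · exact Or.inr rfl
    · intro x y
      exact Or.inl (subset_closure ⟨x, y, rfl⟩)
  · intro hS
    obtain ⟨fM, hfMS, hfMgap⟩ := main _ hS
    refine hfMS ?_
    intro p ⟨U, hU, hUIci, hUsub⟩
    rw [mem_nhdsWithin] at hU
    obtain ⟨O, hOopen, h0O, hOint⟩ := hU
    obtain ⟨η, hη, hball⟩ := Metric.isOpen_iff.mp hOopen 0 h0O
    obtain ⟨u, v, h0u, huv, hvη, hgap⟩ := hfMgap 0 η (le_refl 0) hη
    have hmid : (u+v)/2 ∈ U := by
      apply hOint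
      constructor
      · apply hball
        rw [Metric.mem_ball, Real.dist_eq, sub_zero,
          abs_of_pos (show (0:ℝ) < (u+v)/2 by linarith)]
        linarith
      · exact le_of_lt (show (0:ℝ) < (u+v)/2 by linarith)
    have hmem := hUsub hmid
    have hVsub : {r : ℝ | ∃ x : X, fM.dist p x = r} ⊆ (Ioo u v)ᶜ := by
      rintro r ⟨x, rfl⟩ hrIoo
      exact hgap p x ⟨hrIoo.1.le, hrIoo.2.le⟩
    have hclsub : closure {r : ℝ | ∃ x : X, fM.dist p x = r} ⊆ (Ioo u v)ᶜ :=
      (isOpen_Ioo.isClosed_compl).closure_subset_iff.mpr hVsub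
    exact hclsub hmem ⟨by linarith, by linarith⟩
end

section
/- Let r > 0, let (X, d) and (Y, e) be metric spaces where d generates the topology of X, and let f : X → Y be a continuous surjective map. Define ρ : X × X → [0,∞) by ρ(x,y) = max(min(d(x,y), r), e(f(x), f(y))). Then ρ is a metric on X generating the topology of X, and for every finite r-separated subset E of Y there exists an isometric embedding of (E, e) into (X, ρ). -/
open Set
open scoped ENNReal

/-- Lemma 3.3: for metric spaces `X`, `Y`, a continuous surjection `f : X → Y` and `r > 0`,
the function `ρ(x,y) = max(min(d(x,y), r), e(f x, f y))` is a metric generating the topology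
of `X`, and every finite `r`-separated subset of `Y` embeds isometrically into `(X, ρ)`. -/
theorem pullback_max_metric_universal
    {X Y : Type*} [MetricSpace X] [MetricSpace Y]
    (r : ℝ) (hr : 0 < r) (f : X → Y) (hf : Continuous f) (hfs : Function.Surjective f) :
    (∃ m : MetricCompat X,
      ∀ x y : X, m.dist x y = max (min (dist x y) r) (dist (f x) (f y))) ∧
    (∀ E : Set Y, E.Finite → (∀ a ∈ E, ∀ b ∈ E, a ≠ b → r ≤ dist a b) →
      ∃ φ : E → X, ∀ a b : E,
        max (min (dist (φ a) (φ b)) r) (dist (f (φ a)) (f (φ b))) = dist (a : Y) (b : Y)) := by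
  constructor
  · set ρ : X → X → ℝ := fun x y => max (min (dist x y) r) (dist (f x) (f y)) with hρ
    have ρ_self : ∀ x, ρ x x = 0 := by
      intro x; simp [ρ, hr.le]
    have ρ_comm : ∀ x y, ρ x y = ρ y x := by
      intro x y; simp [ρ, dist_comm]
    have ρ_triangle : ∀ x y z, ρ x z ≤ ρ x y + ρ y z := by
      intro x y z
      have h1 : min (dist x z) r ≤ min (dist x y) r + min (dist y z) r := by
        rcases le_or_gt r (dist x y) with h | h
        · calc min (dist x z) r ≤ r := min_le_right _ _
            _ = min (dist x y) r + 0 := by simp [min_eq_right h]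
            _ ≤ _ := by gcongr; positivity
        rcases le_or_gt r (dist y z) with h' | h'
        · calc min (dist x z) r ≤ r := min_le_right _ _
            _ = 0 + min (dist y z) r := by simp [min_eq_right h']
            _ ≤ _ := by gcongr; positivity
        · rw [min_eq_left h.le, min_eq_left h'.le]
          exact le_trans (min_le_left _ _) (dist_triangle x y z)
      have h2 : dist (f x) (f z) ≤ dist (f x) (f y) + dist (f y) (f z) :=
        dist_triangle _ _ _
      exact max_le (h1.trans (by gcongr <;> exact le_max_left _ _))
        (h2.trans (by gcongr <;> exact le_max_right _ _))
    have ρ_eq : ∀ x y, ρ x y = 0 → x = y := by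
      intro x y h
      have h2 : min (dist x y) r = 0 := le_antisymm (h ▸ le_max_left _ _) (le_min dist_nonneg hr.le)
      have : dist x y = 0 := by
        rcases min_eq_iff.1 h2 with ⟨h3, _⟩ | ⟨h3, _⟩
        · exact h3
        · exact absurd h3 hr.ne'
      exact eq_of_dist_eq_zero this
    have H : ∀ s : Set X, IsOpen s ↔ ∀ x ∈ s, ∃ ε > 0, ∀ y, ρ x y < ε → y ∈ s := by
      intro s
      constructor
      · intro hs x hx
        rcases Metric.isOpen_iff.1 hs x hx with ⟨ε, hε, hball⟩
        refine ⟨min ε r, lt_min hε hr, fun y hy => ?_⟩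
        have h1 : min (dist x y) r < min ε r := lt_of_le_of_lt (le_max_left _ _) hy
        have h2 : dist x y < ε := by
          rcases le_or_gt r (dist x y) with h | h
          · exact absurd (min_eq_right h ▸ h1) (not_lt.2 (min_le_right _ _))
          · exact lt_of_lt_of_le (min_eq_left h.le ▸ h1) (min_le_left _ _)
        exact hball (Metric.mem_ball'.2 h2)
      · intro h
        rw [isOpen_iff_mem_nhds]
        intro x hx
        rcases h x hx with ⟨ε, hε, hball⟩
        have hcont : Continuous fun y => ρ x y := by
          apply Continuous.max
          · exact ((continuous_const.dist continuous_id).min continuous_const)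
          · exact continuous_const.dist (hf.comp continuous_id)
        have hopen : IsOpen {y | ρ x y < ε} := isOpen_lt hcont continuous_const
        exact Filter.mem_of_superset (hopen.mem_nhds (by simpa [ρ_self x] using hε)) hball
    refine ⟨⟨MetricSpace.ofDistTopology ρ ρ_self ρ_comm ρ_triangle H ρ_eq, rfl⟩,
      fun x y => rfl⟩
  · intro E hE hsep
    choose g hg using hfs
    refine ⟨fun a => g a, fun a b => ?_⟩
    rcases eq_or_ne a b with rfl | hab
    · simp [hg, hr.le]
    · have hab' : (a : Y) ≠ b := Subtype.coe_ne_coe.2 hab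
      have hle : r ≤ dist (a : Y) (b : Y) := hsep a a.2 b b.2 hab'
      rw [hg, hg]
      rw [max_eq_right ((min_le_right _ _).trans hle)]
end

section
/- Let S be a countable subset of [0,∞) with 0 ∈ S, and let X be a countably infinite discrete topological space. Then there exists a metric d ∈ Met(X) that is T(S)-universal, i.e., for every s ∈ S there exist x, y ∈ X with d(x,y) = s. -/
open Set
open scoped ENNReal

/-- Proposition 3.8: for a countable subset `S` of `[0,∞)` containing `0` and a countably
infinite discrete space `X`, there is a `T(S)`-universal metric in `Met(X)`, i.e. a metric
realizing every value in `S`. -/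
theorem countable_discrete_has_TS_universal_metric
    (S : Set ℝ) (hScount : S.Countable) (hSsub : S ⊆ Set.Ici 0) (hS0 : (0 : ℝ) ∈ S)
    {X : Type*} [TopologicalSpace X] [DiscreteTopology X] [Countable X] [Infinite X] :
    ∃ d : MetricCompat X, ∀ s ∈ S, ∃ x y : X, d.dist x y = s := by
  classical
  obtain ⟨e⟩ : Nonempty (X ≃ ℕ) := nonempty_equiv_of_countable
  -- choose an enumeration of the positive values of S
  obtain ⟨g, hgpos, hgsurj⟩ :
      ∃ g : ℕ → ℝ, (∀ n, 0 < g n) ∧ ∀ s ∈ S, s ≠ 0 → ∃ n, g n = s := by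
    by_cases hT : (S \ {0}).Nonempty
    · obtain ⟨g, hg⟩ := (hScount.mono (diff_subset)).exists_eq_range hT
      refine ⟨g, fun n => ?_, fun s hs hs0 => ?_⟩
      · have : g n ∈ S \ {0} := by rw [hg]; exact mem_range_self n
        exact lt_of_le_of_ne (hSsub this.1) (Ne.symm this.2)
      · have : s ∈ range g := by rw [← hg]; exact ⟨hs, hs0⟩
        obtain ⟨n, hn⟩ := this; exact ⟨n, hn⟩
    · exact ⟨fun _ => 1, fun _ => one_pos, fun s hs hs0 => (hT ⟨s, hs, hs0⟩).elim⟩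
  set f : X → ℝ := fun x => g ((e x) / 2) / 2 with hf
  have hfpos : ∀ x, 0 < f x := fun x => half_pos (hgpos _)
  set D : X → X → ℝ := fun x y => if x = y then 0 else f x + f y with hD
  have Dcomm : ∀ x y, D x y = D y x := by
    intro x y
    by_cases h : x = y
    · simp [hD, h]
    · simp [hD, h, Ne.symm h, add_comm]
  have Dnonneg : ∀ x y, 0 ≤ D x y := by
    intro x y
    by_cases h : x = y
    · simp [hD, h]
    · have := (hfpos x).le; have := (hfpos y).le
      simp only [hD, if_neg h]; linarith
  have Dtri : ∀ x y z, D x z ≤ D x y + D y z := by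
    intro x y z
    by_cases hxz : x = z
    · have h0 : D x z = 0 := by simp [hD, hxz]
      rw [h0]; exact add_nonneg (Dnonneg _ _) (Dnonneg _ _)
    · have hxz' : D x z = f x + f z := by simp [hD, hxz]
      rw [hxz']
      by_cases hxy : x = y
      · have h1 : D x y = 0 := by simp [hD, hxy]
        have h2 : D y z = f x + f z := by subst hxy; simp [hD, hxz]
        rw [h1, h2]; simp
      · by_cases hyz : y = z
        · have h1 : D x y = f x + f z := by subst hyz; simp [hD, hxz]
          have h2 : D y z = 0 := by simp [hD, hyz]
          rw [h1, h2]; simp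
        · have h1 : D x y = f x + f y := by simp [hD, hxy]
          have h2 : D y z = f y + f z := by simp [hD, hyz]
          rw [h1, h2]
          have := (hfpos y).le
          linarith
  have Dzero : ∀ x y, D x y = 0 → x = y := by
    intro x y h
    by_contra hxy
    simp only [hD, if_neg hxy] at h
    have := hfpos x; have := hfpos y; linarith
  have Hopen : ∀ s : Set X, IsOpen s ↔ ∀ x ∈ s, ∃ ε > 0, ∀ y, D x y < ε → y ∈ s := by
    intro s
    constructor
    · intro _ x hx
      refine ⟨f x, hfpos x, fun y hy => ?_⟩
      by_contra hys
      have hxy : x ≠ y := fun h => hys (h ▸ hx)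
      simp only [hD, if_neg hxy] at hy
      have := (hfpos y).le
      linarith
    · intro _
      exact isOpen_discrete s
  refine ⟨⟨MetricSpace.ofDistTopology D (fun x => by simp [hD]) Dcomm Dtri Hopen Dzero, rfl⟩,
    fun s hs => ?_⟩
  by_cases hs0 : s = 0
  · exact ⟨e.symm 0, e.symm 0, by simp [MetricCompat.dist, hs0, hD,
      MetricSpace.ofDistTopology, PseudoMetricSpace.ofDistTopology]⟩
  · obtain ⟨n, hn⟩ := hgsurj s hs hs0
    refine ⟨e.symm (2 * n), e.symm (2 * n + 1), ?_⟩
    have hne : e.symm (2 * n) ≠ e.symm (2 * n + 1) := by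
      simp [e.symm.injective.ne_iff]
    show D _ _ = s
    simp only [hD, if_neg hne, hf, Equiv.apply_symm_apply]
    have h1 : 2 * n / 2 = n := by omega
    have h2 : (2 * n + 1) / 2 = n := by omega
    rw [h1, h2, hn]; ring
end

section
/- Let S be a dense subset of [0,∞) with 0 ∈ S, and let X be a strongly 0-dimensional metrizable space. Then the closure in (Met(X), D_X) of the set of all T(S)-universal metrics in Met(X) is meager in (Met(X), D_X). In particular, the set of T(S)-universal metrics itself is meager. -/
open Set
open scoped ENNReal

/-- A metric `d` is `T(S)`-universal if every value in `S` is realized as a distance. -/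
def TSUniversal {X : Type*} [TopologicalSpace X] (S : Set ℝ) (d : MetricCompat X) : Prop :=
  ∀ s ∈ S, ∃ x y : X, d.dist x y = s


section PartitionAux

variable {X : Type*}

/-- In a strongly zero-dimensional metric space, there is a "piece assignment" `p : X → X`
such that points in the same piece are `δ`-close and pieces are open. -/
lemma exists_good_index [MetricSpace X] (hX : StronglyZeroDim X) {δ : ℝ} (hδ : 0 < δ) :
    ∃ p : X → X, (∀ x y, p x = p y → dist x y ≤ δ) ∧ ∀ x, IsOpen {y | p y = p x} := by
  obtain ⟨v, hvo, hvU, hvLF, hvsub⟩ := precise_refinement (fun c : X => Metric.ball c (δ / 2))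
    (fun _ => Metric.isOpen_ball)
    (iUnion_eq_univ_iff.2 fun x => ⟨x, Metric.mem_ball_self (by linarith)⟩)
  obtain ⟨w, hwU, hwo, hwc⟩ :=
    exists_iUnion_eq_closure_subset hvo (fun x => hvLF.point_finite x) hvU
  have hsep : ∀ i, ∃ V : Set X, IsClopen V ∧ w i ⊆ V ∧ V ⊆ v i := by
    intro i
    obtain ⟨V, hV, h1, h2⟩ := hX (closure (w i)) (v i)ᶜ isClosed_closure
      (hvo i).isClosed_compl (disjoint_compl_right.mono_left (hwc i))
    refine ⟨V, hV, subset_closure.trans h1, fun x hx => by_contra fun hc => ?_⟩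
    exact (h2.le_bot ⟨hx, hc⟩)
  choose V hVclopen hVw hVv using hsep
  have hVLF : LocallyFinite V := hvLF.subset hVv
  have hVU : ∀ x : X, ∃ i, x ∈ V i := by
    intro x
    have : x ∈ ⋃ i, w i := hwU ▸ mem_univ x
    obtain ⟨i, hi⟩ := mem_iUnion.1 this
    exact ⟨i, hVw i hi⟩
  classical
  let r : X → X → Prop := WellOrderingRel
  have wf : WellFounded r := (WellOrderingRel.isWellOrder (α := X)).toIsWellFounded.wf
  let p : X → X := fun x => wf.min {i | x ∈ V i} ⟨(hVU x).choose, (hVU x).choose_spec⟩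
  have hpmem : ∀ x, x ∈ V (p x) := fun x =>
    wf.min_mem {i | x ∈ V i} ⟨(hVU x).choose, (hVU x).choose_spec⟩
  have hpmin : ∀ x j, x ∈ V j → ¬ r j (p x) := fun x j hj => wf.not_lt_min {i | x ∈ V i} (x := j) hj
  refine ⟨p, ?_, ?_⟩
  · intro x y hxy
    have hx : x ∈ v (p x) := hVv _ (hpmem x)
    have hy : y ∈ v (p x) := hVv _ (hxy ▸ hpmem y)
    have hx' := hvsub (p x) hx
    have hy' := hvsub (p x) hy
    simp only [Metric.mem_ball] at hx' hy'
    calc dist x y ≤ dist x (p x) + dist (p x) y := dist_triangle _ _ _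
      _ ≤ δ / 2 + δ / 2 := by
          rw [dist_comm (p x) y]; exact add_le_add hx'.le hy'.le
      _ = δ := by ring
  · intro x
    have hclass : {y | p y = p x} = V (p x) \ ⋃ j : {j // r j (p x)}, V j.1 := by
      ext y
      simp only [mem_setOf_eq, mem_diff, mem_iUnion]
      constructor
      · intro h
        refine ⟨h ▸ hpmem y, ?_⟩
        rintro ⟨⟨j, hj⟩, hyj⟩
        exact hpmin y j hyj (h ▸ hj)
      · rintro ⟨h1, h2⟩
        have hmem : p x ∈ {i | y ∈ V i} := h1
        rcases trichotomous (r := (WellOrderingRel : X → X → Prop)) (p y) (p x) with h | h | h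
        · exact absurd ⟨⟨p y, h⟩, hpmem y⟩ h2
        · exact h
        · exact absurd h (hpmin y (p x) h1)
    rw [hclass]
    have hclosed : IsClosed (⋃ j : {j // r j (p x)}, V j.1) :=
      (hVLF.comp_injective Subtype.val_injective).isClosed_iUnion
        fun j => (hVclopen j.1).isClosed
    exact (hVclopen (p x)).isOpen.sdiff hclosed

/-- From a piece assignment, build a new compatible metric that is `2δ`-close to the
original and whose values avoid the interval `(δ, 2δ)`. -/
lemma exists_gap_metric [m0 : MetricSpace X] (hX : StronglyZeroDim X) {δ : ℝ} (hδ : 0 < δ) :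
    ∃ m : MetricSpace X,
      m.toUniformSpace.toTopologicalSpace = m0.toUniformSpace.toTopologicalSpace ∧
      (∀ x y, |m.dist x y - m0.dist x y| ≤ 2 * δ) ∧
      (∀ x y, m.dist x y ≤ δ ∨ 2 * δ ≤ m.dist x y) := by
  classical
  obtain ⟨p, hp1, hp2⟩ := exists_good_index hX hδ
  set D : X → X → ℝ := fun x y => if p x = p y then dist x y else max (dist x y) (2 * δ)
    with hD
  have hDge : ∀ x y, dist x y ≤ D x y := by
    intro x y; by_cases h : p x = p y <;> simp [hD, h, le_max_left]
  have hDnn : ∀ x y, 0 ≤ D x y := fun x y => dist_nonneg.trans (hDge x y)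
  have hDbig : ∀ x y, p x ≠ p y → 2 * δ ≤ D x y := by
    intro x y h; simp [hD, h, le_max_right]
  have hDself : ∀ x, D x x = 0 := by intro x; simp [hD]
  have hDcomm : ∀ x y, D x y = D y x := by
    intro x y
    by_cases h : p x = p y
    · simp only [hD]
      rw [if_pos h, if_pos h.symm, dist_comm]
    · simp only [hD]
      rw [if_neg h, if_neg (Ne.symm h), dist_comm x y]
  have hDtri : ∀ x y z, D x z ≤ D x y + D y z := by
    intro x y z
    by_cases h : p x = p z
    · calc D x z = dist x z := by simp [hD, h]
        _ ≤ dist x y + dist y z := dist_triangle _ _ _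
        _ ≤ D x y + D y z := add_le_add (hDge x y) (hDge y z)
    · have hDxz : D x z = max (dist x z) (2 * δ) := by simp [hD, h]
      rw [hDxz]
      refine max_le ?_ ?_
      · calc dist x z ≤ dist x y + dist y z := dist_triangle _ _ _
          _ ≤ D x y + D y z := add_le_add (hDge x y) (hDge y z)
      · rcases ne_or_eq (p x) (p y) with h' | h'
        · calc (2:ℝ) * δ ≤ D x y := hDbig x y h'
            _ ≤ D x y + D y z := le_add_of_nonneg_right (hDnn y z)
        · have h'' : p y ≠ p z := fun hc => h (h'.trans hc)
          calc (2:ℝ) * δ ≤ D y z := hDbig y z h''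
            _ ≤ D x y + D y z := le_add_of_nonneg_left (hDnn x y)
  have hDeq : ∀ x y, D x y = 0 → x = y := by
    intro x y hxy
    by_cases h : p x = p y
    · simp only [hD, if_pos h] at hxy; exact eq_of_dist_eq_zero hxy
    · exfalso
      have := hDbig x y h
      rw [hxy] at this
      linarith
  have H : ∀ s : Set X, IsOpen s ↔ ∀ x ∈ s, ∃ ε > 0, ∀ y, D x y < ε → y ∈ s := by
    intro s
    constructor
    · intro hs x hx
      obtain ⟨ε, hε, hball⟩ := Metric.isOpen_iff.1 hs x hx
      refine ⟨min ε (2 * δ), lt_min hε (by linarith), fun y hy => ?_⟩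
      by_cases h : p x = p y
      · apply hball
        rw [Metric.mem_ball, dist_comm]
        calc dist x y = D x y := by simp [hD, h]
          _ < min ε (2 * δ) := hy
          _ ≤ ε := min_le_left _ _
      · exfalso
        have h1 := hDbig x y h
        have h2 : D x y < 2 * δ := lt_of_lt_of_le hy (min_le_right _ _)
        linarith
    · intro hs
      rw [isOpen_iff_forall_mem_open]
      intro x hx
      obtain ⟨ε, hε, hball⟩ := hs x hx
      refine ⟨{y | p y = p x} ∩ Metric.ball x ε, ?_, (hp2 x).inter Metric.isOpen_ball, ?_⟩
      · rintro y ⟨hy1, hy2⟩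
        apply hball
        rw [Metric.mem_ball, dist_comm] at hy2
        calc D x y = dist x y := by simp [hD, hy1.symm]
          _ < ε := hy2
      · exact ⟨rfl, Metric.mem_ball_self hε⟩
  refine ⟨MetricSpace.ofDistTopology D hDself hDcomm hDtri H hDeq, rfl, ?_, ?_⟩
  · intro x y
    by_cases h : p x = p y
    · show |D x y - dist x y| ≤ 2 * δ
      simp only [hD, if_pos h, sub_self, abs_zero]
      linarith
    · show |D x y - dist x y| ≤ 2 * δ
      simp only [hD, if_neg h]
      rw [abs_le]
      constructor
      · have := le_max_left (dist x y) (2 * δ); linarith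
      · have h1 : max (dist x y) (2 * δ) ≤ dist x y + 2 * δ :=
          max_le (by linarith [dist_nonneg (x := x) (y := y)])
            (by linarith [dist_nonneg (x := x) (y := y)])
        linarith
  · intro x y
    by_cases h : p x = p y
    · left
      show D x y ≤ δ
      simp only [hD, if_pos h]
      exact hp1 x y h
    · right
      exact hDbig x y h

end PartitionAux


section SupDistAux

variable {X : Type*} [TopologicalSpace X]

lemma supDist_self' (d : MetricCompat X) : MetricCompat.supDist d d = 0 := by
  simp only [MetricCompat.supDist, sub_self, abs_zero, ENNReal.ofReal_zero]
  exact ENNReal.iSup_eq_zero.2 fun _ => rfl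

lemma le_supDist (d e : MetricCompat X) (x y : X) :
    ENNReal.ofReal |d.dist x y - e.dist x y| ≤ MetricCompat.supDist d e :=
  le_iSup (fun p : X × X => ENNReal.ofReal |d.dist p.1 p.2 - e.dist p.1 p.2|) (x, y)

lemma supDist_triangle' (d e f : MetricCompat X) :
    MetricCompat.supDist d f ≤ MetricCompat.supDist d e + MetricCompat.supDist e f := by
  simp only [MetricCompat.supDist]
  refine iSup_le fun p => ?_
  calc ENNReal.ofReal |d.dist p.1 p.2 - f.dist p.1 p.2|
      ≤ ENNReal.ofReal
        (|d.dist p.1 p.2 - e.dist p.1 p.2| + |e.dist p.1 p.2 - f.dist p.1 p.2|) :=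
        ENNReal.ofReal_le_ofReal (abs_sub_le _ _ _)
    _ = ENNReal.ofReal |d.dist p.1 p.2 - e.dist p.1 p.2| +
        ENNReal.ofReal |e.dist p.1 p.2 - f.dist p.1 p.2| :=
        ENNReal.ofReal_add (abs_nonneg _) (abs_nonneg _)
    _ ≤ _ := add_le_add (le_supDist _ _ _ _) (le_supDist _ _ _ _)

lemma ball_isOpen (d : MetricCompat X) {r : ℝ≥0∞} (hr : 0 < r) :
    IsOpen {e : MetricCompat X | MetricCompat.supDist d e < r} :=
  TopologicalSpace.GenerateOpen.basic _ ⟨d, r, hr, rfl⟩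

lemma exists_ball_subset {O : Set (MetricCompat X)} (hO : IsOpen O) {d : MetricCompat X}
    (hd : d ∈ O) : ∃ r : ℝ≥0∞, 0 < r ∧ {e | MetricCompat.supDist d e < r} ⊆ O := by
  have key : ∀ O : Set (MetricCompat X),
      TopologicalSpace.GenerateOpen
        { U | ∃ (d : MetricCompat X) (r : ℝ≥0∞), 0 < r ∧
          U = { e | MetricCompat.supDist d e < r } } O →
      ∀ d ∈ O, ∃ r : ℝ≥0∞, 0 < r ∧ {e | MetricCompat.supDist d e < r} ⊆ O := by
    intro O hO
    induction hO with
    | basic U hU =>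
        obtain ⟨c, r₀, hr₀, rfl⟩ := hU
        intro d hd
        have hs : MetricCompat.supDist c d < r₀ := hd
        refine ⟨r₀ - MetricCompat.supDist c d, tsub_pos_of_lt hs, fun e he => ?_⟩
        show MetricCompat.supDist c e < r₀
        calc MetricCompat.supDist c e
            ≤ MetricCompat.supDist c d + MetricCompat.supDist d e := supDist_triangle' c d e
          _ < MetricCompat.supDist c d + (r₀ - MetricCompat.supDist c d) :=
              ENNReal.add_lt_add_left (ne_top_of_lt hs) he
          _ = r₀ := add_tsub_cancel_of_le hs.le
    | univ => exact fun d _ => ⟨1, zero_lt_one, fun _ _ => trivial⟩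
    | inter U V _ _ ihU ihV =>
        intro d hd
        obtain ⟨r1, hr1, h1⟩ := ihU d hd.1
        obtain ⟨r2, hr2, h2⟩ := ihV d hd.2
        refine ⟨min r1 r2, lt_min hr1 hr2, fun e he => ?_⟩
        have he' : MetricCompat.supDist d e < min r1 r2 := he
        exact ⟨h1 (show MetricCompat.supDist d e < r1 from
            lt_of_lt_of_le he' (min_le_left _ _)),
          h2 (show MetricCompat.supDist d e < r2 from
            lt_of_lt_of_le he' (min_le_right _ _))⟩
    | sUnion T _ ih =>
        intro d hd
        obtain ⟨V, hV, hdV⟩ := hd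
        obtain ⟨r, hr, hsub⟩ := ih V hV d hdV
        exact ⟨r, hr, fun e he => ⟨V, hV, hsub he⟩⟩
  exact key O hO d hd

end SupDistAux


/-- Theorem 3.11: for a dense subset `S` of `[0,∞)` with `0 ∈ S` and a strongly
`0`-dimensional metrizable space `X`, the closure of the set of `T(S)`-universal metrics is
meager in `(Met(X), D_X)`; in particular, the set of `T(S)`-universal metrics is meager. -/
theorem TS_universal_metrics_meager
    (S : Set ℝ) (hSsub : S ⊆ Set.Ici 0) (hSdense : Set.Ici (0 : ℝ) ⊆ closure S)
    (hS0 : (0 : ℝ) ∈ S)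
    {X : Type*} [TopologicalSpace X] [TopologicalSpace.MetrizableSpace X]
    (hX : StronglyZeroDim X) :
    IsMeagre (closure { e : MetricCompat X | TSUniversal S e }) ∧
    IsMeagre { e : MetricCompat X | TSUniversal S e } := by
  classical
  set U := { e : MetricCompat X | TSUniversal S e } with hUdef
  have key : interior (closure U) = ∅ := by
    rw [eq_empty_iff_forall_notMem]
    intro d hd
    obtain ⟨r, hr, hball⟩ := exists_ball_subset isOpen_interior hd
    have hballU : {e | MetricCompat.supDist d e < r} ⊆ closure U :=
      hball.trans interior_subset
    obtain ⟨δ, hδ, hδr⟩ : ∃ δ : ℝ, 0 < δ ∧ ENNReal.ofReal (2 * δ) < r := by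
      rcases eq_or_ne r ⊤ with rfl | hne
      · exact ⟨1, one_pos, ENNReal.ofReal_lt_top⟩
      · have h0 : 0 < r.toReal := ENNReal.toReal_pos hr.ne' hne
        refine ⟨r.toReal / 4, by linarith, ?_⟩
        calc ENNReal.ofReal (2 * (r.toReal / 4)) = ENNReal.ofReal (r.toReal / 2) := by
              rw [show 2 * (r.toReal / 4) = r.toReal / 2 by ring]
          _ < ENNReal.ofReal r.toReal := by
              rw [ENNReal.ofReal_lt_ofReal_iff h0]; linarith
          _ = r := ENNReal.ofReal_toReal hne
    have hX' : @StronglyZeroDim X d.1.toUniformSpace.toTopologicalSpace := by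
      rw [d.2]; exact hX
    obtain ⟨m, hmtop, hclose, hgap⟩ := @exists_gap_metric X d.1 hX' δ hδ
    set e : MetricCompat X := ⟨m, hmtop.trans d.2⟩ with he_def
    have hde : MetricCompat.supDist d e < r := by
      refine lt_of_le_of_lt ?_ hδr
      simp only [MetricCompat.supDist]
      refine iSup_le fun p => ?_
      apply ENNReal.ofReal_le_ofReal
      show |d.1.dist p.1 p.2 - m.dist p.1 p.2| ≤ 2 * δ
      rw [abs_sub_comm]
      exact hclose p.1 p.2
    have heU : e ∈ closure U := hballU hde
    have hη : (0 : ℝ) < δ / 4 := by linarith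
    have hη' : (0 : ℝ≥0∞) < ENNReal.ofReal (δ / 4) := ENNReal.ofReal_pos.2 hη
    have hopen : IsOpen {f : MetricCompat X |
        MetricCompat.supDist e f < ENNReal.ofReal (δ / 4)} := ball_isOpen e hη'
    have hmem : e ∈ {f : MetricCompat X |
        MetricCompat.supDist e f < ENNReal.ofReal (δ / 4)} := by
      show MetricCompat.supDist e e < _
      rw [supDist_self']
      exact hη'
    obtain ⟨f, hf1, hf2⟩ := _root_.mem_closure_iff.1 heU _ hopen hmem
    obtain ⟨s, hsIoo, hsS⟩ := _root_.mem_closure_iff.1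
      (hSdense (show (0 : ℝ) ≤ 3 * δ / 2 by linarith))
      (Set.Ioo (δ + δ / 4) (2 * δ - δ / 4)) isOpen_Ioo ⟨by linarith, by linarith⟩
    obtain ⟨x, y, hxy⟩ := hf2 s hsS
    have hlt : |e.dist x y - f.dist x y| < δ / 4 := by
      have h1 := le_supDist e f x y
      have h2 := lt_of_le_of_lt h1 hf1
      rwa [ENNReal.ofReal_lt_ofReal_iff hη] at h2
    rw [hxy] at hlt
    have hg : e.dist x y ≤ δ ∨ 2 * δ ≤ e.dist x y := hgap x y
    obtain ⟨ha, hb⟩ := abs_lt.1 hlt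
    obtain ⟨hc, hd'⟩ := hsIoo
    rcases hg with h | h
    · linarith
    · linarith
  have hnwd : IsNowhereDense (closure U) := by
    rw [IsNowhereDense, closure_closure]; exact key
  have hmc : IsMeagre (closure U) := by
    rw [isMeagre_iff_countable_union_isNowhereDense]
    exact ⟨{closure U}, by simpa using hnwd, countable_singleton _, by simp⟩
  exact ⟨hmc, hmc.mono subset_closure⟩
end
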